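/- arXiv:math/0601687 — 3 statements merged into one kernel-verified Lean document; each statement's English description precedes it below -/
import Mathlib

section
/- Let ρ < σ < τ in NC_n. (a) If ρ = σ_0 ⋖ σ_1 ⋖ ⋯ ⋖ σ_k = σ is a saturated chain with label sequence α_i = π(σ_{i−1})⁻¹π(σ_i), then there is a unique noncrossing partition σ' of [n] admitting a saturated chain σ' = ρ_0 ⋖ ρ_1 ⋖ ⋯ ⋖ ρ_k = τ with π(ρ_{i−1})⁻¹π(ρ_i) = α_i for all i. (b) Dually, if σ = σ_0 ⋖ σ_1 ⋖ ⋯ ⋖ σ_k = τ is a saturated chain with label sequence β_i = π(σ_{i−1})⁻¹π(σ_i), then there is a unique noncrossing partition σ'' of [n] admitting a saturated chain ρ = ρ_0 ⋖ ρ_1 ⋖ ⋯ ⋖ ρ_k = σ'' with π(ρ_{i−1})⁻¹π(ρ_i) = β_i for all i. -/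
/-- A partition of `[n]` (encoded as an equivalence relation / setoid on `Fin n`)
is *noncrossing* if there are no elements `a < b < c < d` with `a` and `c` in one
block and `b` and `d` in a different block. -/
def IsNoncrossing {n : ℕ} (σ : Setoid (Fin n)) : Prop :=
  ∀ a b c d : Fin n, a < b → b < c → c < d → σ a c → σ b d → σ a b

/-- The noncrossing partition lattice `NC_n`, ordered by refinement. -/
abbrev NC (n : ℕ) := {σ : Setoid (Fin n) // IsNoncrossing σ}

/-- `p` is the permutation `π(σ)` associated to the partition `σ`: each block of `σ`
is a cycle of `p`, cycled in increasing order. -/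
def IsPiPerm {n : ℕ} (σ : Setoid (Fin n)) (p : Equiv.Perm (Fin n)) : Prop :=
  ∀ x : Fin n,
    σ x (p x) ∧
    ((∃ y, σ x y ∧ x < y) → (x < p x ∧ ∀ y, σ x y → x < y → p x ≤ y)) ∧
    ((∀ y, σ x y → y ≤ x) → ∀ y, σ x y → p x ≤ y)


namespace NCAux
open Equiv Equiv.Perm

variable {n : ℕ}

/-- The setoid whose relation is `SameCycle u`. -/
def scs (u : Equiv.Perm (Fin n)) : Setoid (Fin n) :=
  ⟨u.SameCycle, Equiv.Perm.SameCycle.equivalence u⟩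

lemma scs_apply (u : Equiv.Perm (Fin n)) (x y : Fin n) : scs u x y ↔ u.SameCycle x y := Iff.rfl

/-- a permutation is "NC-good" if its cycle partition is noncrossing and it cycles
each of its orbits in increasing order. -/
def NCgood (u : Equiv.Perm (Fin n)) : Prop :=
  IsNoncrossing (scs u) ∧ IsPiPerm (scs u) u

def minset (r : Fin n → Fin n → Prop) : Set (Fin n) := {x | ∀ y, r x y → x ≤ y}

noncomputable def ccount (r : Fin n → Fin n → Prop) : ℕ := (minset r).ncard

noncomputable def cyc (u : Equiv.Perm (Fin n)) : ℕ := ccount u.SameCycle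

lemma ccount_congr {r r' : Fin n → Fin n → Prop} (h : ∀ x y, r x y ↔ r' x y) :
    ccount r = ccount r' := by
  unfold ccount minset
  congr 1
  ext x
  simp only [Set.mem_setOf_eq]
  constructor <;> intro hx y hy
  · exact hx y ((h x y).mpr hy)
  · exact hx y ((h x y).mp hy)

/-- merging the classes of `a` and `b`. -/
def mrg (s : Setoid (Fin n)) (a b : Fin n) : Fin n → Fin n → Prop :=
  fun x y => s x y ∨ (s x a ∧ s b y) ∨ (s x b ∧ s a y)

/-- splitting the class of `a` (`= class of b`) along the interval `(a, b]`. -/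
def spl (s : Setoid (Fin n)) (a b : Fin n) : Fin n → Fin n → Prop :=
  fun x y => s x y ∧ (s x a → ((a < x ∧ x ≤ b) ↔ (a < y ∧ y ≤ b)))

lemma mrg_equivalence (s : Setoid (Fin n)) (a b : Fin n) : Equivalence (mrg s a b) := by
  constructor
  · intro x; exact Or.inl (s.refl' x)
  · rintro x y (h | ⟨h1, h2⟩ | ⟨h1, h2⟩)
    · exact Or.inl (s.symm' h)
    · exact Or.inr (Or.inr ⟨s.symm' h2, s.symm' h1⟩)
    · exact Or.inr (Or.inl ⟨s.symm' h2, s.symm' h1⟩)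
  · rintro x y z (h | ⟨h1, h2⟩ | ⟨h1, h2⟩) (g | ⟨g1, g2⟩ | ⟨g1, g2⟩)
    · exact Or.inl (s.trans' h g)
    · exact Or.inr (Or.inl ⟨s.trans' h g1, g2⟩)
    · exact Or.inr (Or.inr ⟨s.trans' h g1, g2⟩)
    · exact Or.inr (Or.inl ⟨h1, s.trans' h2 g⟩)
    · exact Or.inl (s.trans' h1 (s.trans' (s.symm' (s.trans' h2 g1)) g2))
    · exact Or.inl (s.trans' h1 g2)
    · exact Or.inr (Or.inr ⟨h1, s.trans' h2 g⟩)
    · exact Or.inl (s.trans' h1 g2)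
    · exact Or.inl (s.trans' h1 (s.trans' (s.symm' (s.trans' h2 g1)) g2))

lemma spl_equivalence (s : Setoid (Fin n)) (a b : Fin n) : Equivalence (spl s a b) := by
  constructor
  · intro x; exact ⟨s.refl' x, fun _ => Iff.rfl⟩
  · rintro x y ⟨h1, h2⟩
    exact ⟨s.symm' h1, fun hy => (h2 (s.trans' h1 hy)).symm⟩
  · rintro x y z ⟨h1, h2⟩ ⟨g1, g2⟩
    exact ⟨s.trans' h1 g1, fun hx => (h2 hx).trans (g2 (s.trans' (s.symm' h1) hx))⟩

end NCAux


namespace NCAux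
open Equiv Equiv.Perm

variable {n : ℕ}

lemma piPerm_unique {s : Setoid (Fin n)} {p q : Equiv.Perm (Fin n)}
    (hp : IsPiPerm s p) (hq : IsPiPerm s q) : p = q := by
  apply Equiv.ext
  intro x
  obtain ⟨hp1, hp2, hp3⟩ := hp x
  obtain ⟨hq1, hq2, hq3⟩ := hq x
  by_cases hex : ∃ y, s x y ∧ x < y
  · obtain ⟨hpl, hpm⟩ := hp2 hex
    obtain ⟨hql, hqm⟩ := hq2 hex
    exact le_antisymm (hpm _ hq1 hql) (hqm _ hp1 hpl)
  · push_neg at hex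
    have hmax : ∀ y, s x y → y ≤ x := hex
    exact le_antisymm (hp3 hmax _ hq1) (hq3 hmax _ hp1)

lemma rel_of_sameCycle {s : Setoid (Fin n)} {p : Equiv.Perm (Fin n)} (h : IsPiPerm s p)
    {x y : Fin n} (hxy : p.SameCycle x y) : s x y := by
  have key : ∀ (i : ℕ) (z : Fin n), s z ((p ^ i) z) := by
    intro i
    induction i with
    | zero => intro z; simpa using s.refl' z
    | succ i ih =>
      intro z
      have : (p ^ (i+1)) z = (p ^ i) (p z) := by
        rw [pow_succ]
        rfl
      rw [this]
      exact s.trans' (h z).1 (ih (p z))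
  obtain ⟨i, _, hi⟩ := hxy.exists_pow_eq'
  exact hi ▸ key i x

lemma sameCycle_of_rel {s : Setoid (Fin n)} {p : Equiv.Perm (Fin n)} (h : IsPiPerm s p)
    {x y : Fin n} (hxy : s x y) : p.SameCycle x y := by
  have main : ∀ (k : ℕ) (x y : Fin n), s x y → x < y → y.val - x.val ≤ k → p.SameCycle x y := by
    intro k
    induction k with
    | zero =>
      intro x y _ hlt hle
      rw [Fin.lt_def] at hlt
      omega
    | succ k ih =>
      intro x y hs hlt hle
      have h2 := (h x).2.1 ⟨y, hs, hlt⟩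
      have hpx : p.SameCycle x (p x) := ⟨1, by simp⟩
      rcases eq_or_lt_of_le (h2.2 y hs hlt) with he | hlt2
      · rw [← he]; exact hpx
      · have hxp : x < p x := h2.1
        have hspx : s (p x) y := s.trans' (s.symm' (h x).1) hs
        have : y.val - (p x).val ≤ k := by
          have := Fin.lt_def.mp hxp
          have := Fin.lt_def.mp hlt
          omega
        exact hpx.trans (ih (p x) y hspx hlt2 this)
  rcases lt_trichotomy x y with hlt | heq | hgt
  · exact main (y.val - x.val) x y hxy hlt le_rfl
  · exact heq ▸ SameCycle.refl _ _
  · exact (main (x.val - y.val) y x (s.symm' hxy) hgt le_rfl).symm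

lemma sameCycle_iff_rel {s : Setoid (Fin n)} {p : Equiv.Perm (Fin n)} (h : IsPiPerm s p)
    (x y : Fin n) : p.SameCycle x y ↔ s x y :=
  ⟨rel_of_sameCycle h, sameCycle_of_rel h⟩

lemma scs_eq {s : Setoid (Fin n)} {p : Equiv.Perm (Fin n)} (h : IsPiPerm s p) : scs p = s :=
  Setoid.ext (sameCycle_iff_rel h)

end NCAux


namespace NCAux
open Equiv Equiv.Perm

variable {n : ℕ}

lemma ccount_spl (s : Setoid (Fin n)) {a b : Fin n} (hab : s a b) (hlt : a < b) :
    ccount (spl s a b) = ccount s + 1 := by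
  classical
  set B : Set (Fin n) := {x | s x a ∧ a < x ∧ x ≤ b} with hB
  have hBne : B.Nonempty := ⟨b, s.symm' hab, hlt, le_refl b⟩
  obtain ⟨m, hmB, hmmin⟩ := Set.exists_min_image B id B.toFinite hBne
  have hmB' : s m a ∧ a < m ∧ m ≤ b := hmB
  have hseteq : minset (spl s a b) = insert m (minset s) := by
    ext x
    simp only [minset, Set.mem_setOf_eq, Set.mem_insert_iff]
    constructor
    · intro hx
      by_cases hxa : s x a
      · by_cases hxI : a < x ∧ x ≤ b
        · left
          have h1 : x ≤ m := hx m ⟨s.trans' hxa (s.symm' hmB'.1),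
            fun _ => ⟨fun _ => ⟨hmB'.2.1, hmB'.2.2⟩, fun _ => hxI⟩⟩
          exact le_antisymm h1 (hmmin x ⟨hxa, hxI⟩)
        · right
          intro y hy
          by_cases hyI : a < y ∧ y ≤ b
          · have hxa' : x ≤ a := hx a ⟨hxa,
              fun _ => iff_of_false hxI (fun h => lt_irrefl a h.1)⟩
            exact le_of_lt (lt_of_le_of_lt hxa' hyI.1)
          · exact hx y ⟨hy, fun _ => iff_of_false hxI hyI⟩
      · right
        intro y hy
        exact hx y ⟨hy, fun h => absurd h hxa⟩
    · rintro (rfl | hx)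
      · rintro y ⟨hy1, hy2⟩
        have hya : s y a := s.trans' (s.symm' hy1) hmB'.1
        have hyI : a < y ∧ y ≤ b := (hy2 hmB'.1).mp ⟨hmB'.2.1, hmB'.2.2⟩
        exact hmmin y ⟨hya, hyI⟩
      · intro y hy
        exact hx y hy.1
  have hmnot : m ∉ minset s := by
    intro hm
    exact absurd hmB'.2.1 (not_lt.mpr (hm a hmB'.1))
  unfold ccount
  rw [hseteq, Set.ncard_insert_of_notMem hmnot]

lemma mrg_comm (s : Setoid (Fin n)) (a b x y : Fin n) : mrg s a b x y ↔ mrg s b a x y := by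
  unfold mrg
  tauto

lemma ccount_mrg_aux (s : Setoid (Fin n)) {a b mA mB : Fin n}
    (hmA : s mA a) (hmB : s mB b) (hminA : ∀ y, s y a → mA ≤ y) (hminB : ∀ y, s y b → mB ≤ y)
    (hab : ¬ s a b) (hle : mA ≤ mB) : ccount (mrg s a b) + 1 = ccount s := by
  have hseteq : minset (mrg s a b) = minset s \ {mB} := by
    ext x
    simp only [minset, Set.mem_setOf_eq, Set.mem_diff, Set.mem_singleton_iff]
    constructor
    · intro hx
      refine ⟨fun y hy => hx y (Or.inl hy), ?_⟩
      intro hxeq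
      have hxb : s x b := by rw [hxeq]; exact hmB
      have h1 : x ≤ mA := hx mA (Or.inr (Or.inr ⟨hxb, s.symm' hmA⟩))
      have h2 : mA = x := le_antisymm (by rw [hxeq]; exact hle) h1
      exact hab (s.trans' (s.symm' hmA) (by rw [h2]; exact hxb))
    · rintro ⟨hx, hxm⟩
      rintro y (hy | ⟨h1, h2⟩ | ⟨h1, h2⟩)
      · exact hx y hy
      · have hxmA : x = mA :=
          le_antisymm (hx mA (s.trans' h1 (s.symm' hmA))) (hminA x h1)
        exact le_trans (le_trans hxmA.le hle) (hminB y (s.symm' h2))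
      · exact absurd (le_antisymm (hx mB (s.trans' h1 (s.symm' hmB))) (hminB x h1)) hxm
  have hm'mem : mB ∈ minset s := fun y hy => hminB y (s.trans' (s.symm' hy) hmB)
  unfold ccount
  rw [hseteq, Set.ncard_diff_singleton_add_one hm'mem]

lemma ccount_mrg (s : Setoid (Fin n)) {a b : Fin n} (hab : ¬ s a b) :
    ccount (mrg s a b) + 1 = ccount s := by
  obtain ⟨mA, hmA0, hminA0⟩ := Set.exists_min_image {x | s x a} id (Set.toFinite _) ⟨a, s.refl' a⟩
  obtain ⟨mB, hmB0, hminB0⟩ := Set.exists_min_image {x | s x b} id (Set.toFinite _) ⟨b, s.refl' b⟩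
  have hmA : s mA a := hmA0
  have hmB : s mB b := hmB0
  have hminA : ∀ y, s y a → mA ≤ y := fun y hy => hminA0 y hy
  have hminB : ∀ y, s y b → mB ≤ y := fun y hy => hminB0 y hy
  rcases le_total mA mB with hle | hle
  · exact ccount_mrg_aux s hmA hmB hminA hminB hab hle
  · rw [ccount_congr (mrg_comm s a b)]
    exact ccount_mrg_aux s hmB hmA hminB hminA (fun h => hab (s.symm' h)) hle

end NCAux


namespace NCAux
open Equiv Equiv.Perm

variable {n : ℕ}

lemma mul_swap_apply_ne (u : Equiv.Perm (Fin n)) {a b x : Fin n} (hxa : x ≠ a) (hxb : x ≠ b) :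
    (u * Equiv.swap a b) x = u x := by
  rw [Equiv.Perm.mul_apply, Equiv.swap_apply_of_ne_of_ne hxa hxb]

lemma mul_swap_apply_left (u : Equiv.Perm (Fin n)) (a b : Fin n) :
    (u * Equiv.swap a b) a = u b := by
  rw [Equiv.Perm.mul_apply, Equiv.swap_apply_left]

lemma mul_swap_apply_right (u : Equiv.Perm (Fin n)) (a b : Fin n) :
    (u * Equiv.swap a b) b = u a := by
  rw [Equiv.Perm.mul_apply, Equiv.swap_apply_right]

lemma rel_of_sameCycle_gen {w : Equiv.Perm (Fin n)} {R : Fin n → Fin n → Prop}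
    (hR : Equivalence R) (hstep : ∀ z, R z (w z)) {x y : Fin n}
    (h : w.SameCycle x y) : R x y := by
  have key : ∀ (i : ℕ) (z : Fin n), R z ((w ^ i) z) := by
    intro i
    induction i with
    | zero => intro z; simpa using hR.refl z
    | succ i ih =>
      intro z
      have : (w ^ (i+1)) z = (w ^ i) (w z) := by rw [pow_succ]; rfl
      rw [this]
      exact hR.trans (hstep z) (ih (w z))
  obtain ⟨i, _, hi⟩ := h.exists_pow_eq'
  exact hi ▸ key i x

lemma sameCycle_mul_swap_iff {u : Equiv.Perm (Fin n)} {a b : Fin n} (hab : ¬ u.SameCycle a b) :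
    ∀ x y, (u * Equiv.swap a b).SameCycle x y ↔ mrg (scs u) a b x y := by
  set v := u * Equiv.swap a b with hv
  have hne : a ≠ b := fun h => hab (h ▸ SameCycle.refl u a)
  have hva : v a = u b := mul_swap_apply_left u a b
  have hvb : v b = u a := mul_swap_apply_right u a b
  have hvx : ∀ x, x ≠ a → x ≠ b → v x = u x := fun x h1 h2 => mul_swap_apply_ne u h1 h2
  have hstep_mrg : ∀ z, mrg (scs u) a b z (v z) := by
    intro z
    by_cases hza : z = a
    · subst hza
      rw [hva]
      exact Or.inr (Or.inl ⟨SameCycle.refl u z, ⟨1, by simp⟩⟩)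
    · by_cases hzb : z = b
      · subst hzb
        rw [hvb]
        exact Or.inr (Or.inr ⟨SameCycle.refl u z, ⟨1, by simp⟩⟩)
      · rw [hvx z hza hzb]
        exact Or.inl ⟨1, by simp⟩
  -- (A1) :
  have hA1 : ∀ j, 0 < j → v.SameCycle a ((u ^ j) b) := by
    intro j hj
    induction j with
    | zero => omega
    | succ j ih =>
      rcases Nat.eq_zero_or_pos j with rfl | hjpos
      · exact ⟨1, by simpa using hva⟩
      · have hih := ih hjpos
        set z := (u ^ j) b with hz
        have hza : z ≠ a := by
          intro h
          exact hab (SameCycle.symm ⟨(j : ℤ), by simpa [hz] using h⟩)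
        have hstep : (u ^ (j+1)) b = u z := by rw [pow_succ', Equiv.Perm.mul_apply]
        by_cases hzb : z = b
        · rw [hstep, hzb, ← hva]
          exact ⟨1, by simp⟩
        · rw [hstep, ← hvx z hza hzb]
          exact hih.trans ⟨1, by simp⟩
  have hA0 : v.SameCycle a b := by
    have := hA1 (orderOf u) (orderOf_pos u)
    simpa [pow_orderOf_eq_one] using this
  have hA : ∀ x y, u.SameCycle x y → v.SameCycle x y := by
    intro x y h
    refine rel_of_sameCycle_gen (SameCycle.equivalence v) ?_ h
    intro z
    by_cases hza : z = a
    · subst hza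
      rw [show u z = v b from hvb.symm]
      exact hA0.trans ⟨1, by simp⟩
    · by_cases hzb : z = b
      · subst hzb
        rw [show u z = v a from hva.symm]
        exact hA0.symm.trans ⟨1, by simp⟩
      · rw [← hvx z hza hzb]
        exact ⟨1, by simp⟩
  intro x y
  constructor
  · intro h
    exact rel_of_sameCycle_gen (mrg_equivalence (scs u) a b) hstep_mrg h
  · rintro (h | ⟨h1, h2⟩ | ⟨h1, h2⟩)
    · exact hA x y h
    · exact ((hA x a h1).trans hA0).trans (hA b y h2)
    · exact ((hA x b h1).trans hA0.symm).trans (hA a y h2)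

lemma sameCycle_mul_swap_self {u : Equiv.Perm (Fin n)} {a b : Fin n} (hab : ¬ u.SameCycle a b) :
    (u * Equiv.swap a b).SameCycle a b :=
  (sameCycle_mul_swap_iff hab a b).mpr
    (Or.inr (Or.inl ⟨SameCycle.refl u a, SameCycle.refl u b⟩))

lemma not_sameCycle_mul_swap {u : Equiv.Perm (Fin n)} {a b : Fin n}
    (hab : u.SameCycle a b) (hne : a ≠ b) : ¬ (u * Equiv.swap a b).SameCycle a b := by
  classical
  set v := u * Equiv.swap a b with hv
  have hva : v a = u b := mul_swap_apply_left u a b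
  have hvb : v b = u a := mul_swap_apply_right u a b
  have hex : ∃ j, 0 < j ∧ ((u ^ j) a = a ∨ (u ^ j) a = b) :=
    ⟨orderOf u, orderOf_pos u, Or.inl (by simp [pow_orderOf_eq_one])⟩
  set j₀ := Nat.find hex with hj₀def
  obtain ⟨hj₀pos, hj₀spec⟩ := Nat.find_spec hex
  have hmin : ∀ i, 0 < i → i < j₀ → (u ^ i) a ≠ a ∧ (u ^ i) a ≠ b := by
    intro i hi hij
    constructor
    · intro h; exact Nat.find_min hex hij ⟨hi, Or.inl h⟩
    · intro h; exact Nat.find_min hex hij ⟨hi, Or.inr h⟩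
  have hj₀b : (u ^ j₀) a = b := by
    rcases hj₀spec with h | h
    · exfalso
      obtain ⟨m, _, hm⟩ := hab.exists_pow_eq'
      have hm0 : 0 < m := by
        rcases Nat.eq_zero_or_pos m with rfl | h'
        · exact absurd (by simpa using hm) hne
        · exact h'
      have hmul : ∀ q, (u ^ (j₀ * q)) a = a := by
        intro q
        induction q with
        | zero => simp
        | succ q ih =>
          rw [Nat.mul_succ, pow_add, Equiv.Perm.mul_apply, h, ih]
      have hr : (u ^ (m % j₀)) a = b := by
        have hmeq : m = j₀ * (m / j₀) + m % j₀ := (Nat.div_add_mod m j₀).symm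
        calc (u ^ (m % j₀)) a = (u ^ (m % j₀)) ((u ^ (j₀ * (m / j₀))) a) := by rw [hmul]
        _ = (u ^ (m % j₀ + j₀ * (m / j₀))) a := by rw [pow_add, Equiv.Perm.mul_apply]
        _ = (u ^ m) a := by rw [show m % j₀ + j₀ * (m / j₀) = m by omega]
        _ = b := hm
      have hrlt : m % j₀ < j₀ := Nat.mod_lt m hj₀pos
      rcases Nat.eq_zero_or_pos (m % j₀) with hz | hz
      · rw [hz] at hr; exact hne (by simpa using hr)
      · exact (hmin _ hz hrlt).2 hr
    · exact h
  set O : Set (Fin n) := {z | ∃ i, 0 < i ∧ i ≤ j₀ ∧ z = (u ^ i) a} with hO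
  have hbO : b ∈ O := ⟨j₀, hj₀pos, le_rfl, hj₀b.symm⟩
  have haO : a ∉ O := by
    rintro ⟨i, hi, hile, hia⟩
    rcases eq_or_lt_of_le hile with rfl | hlt
    · rw [hj₀b] at hia; exact hne hia
    · exact (hmin i hi hlt).1 hia.symm
  have hclosed : ∀ z ∈ O, v z ∈ O := by
    rintro z ⟨i, hi, hile, rfl⟩
    rcases eq_or_lt_of_le hile with rfl | hlt
    · rw [hj₀b, hvb]
      exact ⟨1, one_pos, hj₀pos, by simp⟩
    · have hz := hmin i hi hlt
      rw [mul_swap_apply_ne u hz.1 hz.2]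
      exact ⟨i + 1, by omega, by omega, by rw [pow_succ', Equiv.Perm.mul_apply]⟩
  have hOall : ∀ j : ℕ, (v ^ j) b ∈ O := by
    intro j
    induction j with
    | zero => simpa using hbO
    | succ j ih =>
      rw [pow_succ', Equiv.Perm.mul_apply]
      exact hclosed _ ih
  intro hcon
  obtain ⟨i, _, hi⟩ := hcon.symm.exists_pow_eq'
  exact haO (hi ▸ hOall i)

lemma cyc_eq_ccount_scs (u : Equiv.Perm (Fin n)) : cyc u = ccount (⇑(scs u)) := rfl

lemma cyc_mul_swap_not {u : Equiv.Perm (Fin n)} {a b : Fin n} (hab : ¬ u.SameCycle a b) :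
    cyc (u * Equiv.swap a b) + 1 = cyc u := by
  have h1 : cyc (u * Equiv.swap a b) = ccount (mrg (scs u) a b) :=
    ccount_congr (sameCycle_mul_swap_iff hab)
  rw [h1]
  exact ccount_mrg (scs u) hab

lemma cyc_mul_swap_same {u : Equiv.Perm (Fin n)} {a b : Fin n}
    (hab : u.SameCycle a b) (hne : a ≠ b) :
    cyc (u * Equiv.swap a b) = cyc u + 1 := by
  have h2 := not_sameCycle_mul_swap hab hne
  have h3 := cyc_mul_swap_not h2
  rw [mul_assoc, Equiv.swap_mul_self, mul_one] at h3
  omega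

lemma cyc_mul_swap_bounds {u : Equiv.Perm (Fin n)} {a b : Fin n} (hne : a ≠ b) :
    cyc (u * Equiv.swap a b) ≤ cyc u + 1 ∧ cyc u ≤ cyc (u * Equiv.swap a b) + 1 := by
  by_cases h : u.SameCycle a b
  · rw [cyc_mul_swap_same h hne]; omega
  · have := cyc_mul_swap_not h; omega

end NCAux


namespace NCAux
open Equiv Equiv.Perm

variable {n : ℕ}

def splS (s : Setoid (Fin n)) (a b : Fin n) : Setoid (Fin n) :=
  ⟨spl s a b, spl_equivalence s a b⟩

def mrgS (s : Setoid (Fin n)) (a b : Fin n) : Setoid (Fin n) :=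
  ⟨mrg s a b, mrg_equivalence s a b⟩

lemma core_isPiPerm {s : Setoid (Fin n)} {u : Equiv.Perm (Fin n)}
    (h : IsPiPerm s u) {a b : Fin n} (hab : s a b) (hlt : a < b) :
    IsPiPerm (splS s a b) (u * Equiv.swap a b) := by
  set v := u * Equiv.swap a b with hv
  have hmem : ∀ x, s x (u x) := fun x => (h x).1
  have hminp : ∀ x, (∀ y, s x y → y ≤ x) → ∀ y, s x y → u x ≤ y := fun x => (h x).2.2
  intro x
  by_cases hxa : s x a
  · by_cases hxI : a < x ∧ x ≤ b
    · -- x is in the B-part (interval part)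
      have hxna : x ≠ a := fun h' => absurd hxI.1 (h' ▸ lt_irrefl a)
      by_cases hex : ∃ y, spl s a b x y ∧ x < y
      · obtain ⟨y, ⟨hsy, hcond⟩, hlty⟩ := hex
        have hyI : a < y ∧ y ≤ b := (hcond hxa).mp hxI
        have hxnb : x ≠ b := fun h' => absurd hyI.2 (not_le.mpr (h' ▸ hlty))
        have hvx : v x = u x := mul_swap_apply_ne u hxna hxnb
        have hnx := (h x).2.1 ⟨y, hsy, hlty⟩
        have huxI : a < u x ∧ u x ≤ b :=
          ⟨lt_trans hxI.1 hnx.1, le_trans (hnx.2 y hsy hlty) hyI.2⟩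
        refine ⟨?_, ?_, ?_⟩
        · rw [hvx]; exact ⟨hmem x, fun _ => iff_of_true hxI huxI⟩
        · intro _
          rw [hvx]
          exact ⟨hnx.1, fun z hz hltz => hnx.2 z hz.1 hltz⟩
        · intro hmaxx
          exact absurd hlty (not_lt.mpr (hmaxx y ⟨hsy, hcond⟩))
      · push_neg at hex
        have hmax' : ∀ y, spl s a b x y → y ≤ x := hex
        have hxb : x = b := by
          have hsb : spl s a b x b :=
            ⟨s.trans' hxa hab, fun _ => iff_of_true hxI ⟨hlt, le_rfl⟩⟩
          exact le_antisymm hxI.2 (hmax' b hsb)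
        subst hxb
        have hvb : v x = u a := mul_swap_apply_right u a x
        have hnab := (h a).2.1 ⟨x, hab, hlt⟩
        have huaI : a < u a ∧ u a ≤ x := ⟨hnab.1, hnab.2 x hab hlt⟩
        refine ⟨?_, ?_, ?_⟩
        · rw [hvb]
          exact ⟨s.trans' (s.symm' hab) (hmem a), fun _ => iff_of_true hxI huaI⟩
        · rintro ⟨y, hy, hlty⟩
          exact absurd hlty (not_lt.mpr (hmax' y hy))
        · rintro _ y ⟨hsy, hcond⟩
          have hyI : a < y ∧ y ≤ x := (hcond hxa).mp hxI
          rw [hvb]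
          exact hnab.2 y (s.trans' (s.symm' hxa) hsy) hyI.1
    · -- x is in the A-part
      have hxAB : x ≤ a ∨ b < x := by
        rcases not_and_or.mp hxI with h' | h'
        · exact Or.inl (le_of_not_gt h')
        · exact Or.inr (lt_of_not_ge h')
      by_cases hex : ∃ y, spl s a b x y ∧ x < y
      · obtain ⟨y, ⟨hsy, hcond⟩, hlty⟩ := hex
        have hyNI : ¬(a < y ∧ y ≤ b) := fun h' => hxI ((hcond hxa).mpr h')
        by_cases hxeqa : x = a
        · have hvx : v x = u b := by
            show (u * Equiv.swap a b) x = u b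
            rw [hxeqa]
            exact mul_swap_apply_left u a b
          have hyb : b < y := by
            by_contra hyb'
            exact hyNI ⟨by rw [← hxeqa]; exact hlty, le_of_not_gt hyb'⟩
          have hsby : s b y := s.trans' (s.symm' (s.trans' hxa hab)) hsy
          have hnb := (h b).2.1 ⟨y, hsby, hyb⟩
          have hubNI : ¬(a < u b ∧ u b ≤ b) := fun h' => absurd hnb.1 (not_lt.mpr h'.2)
          refine ⟨?_, ?_, ?_⟩
          · rw [hvx]
            exact ⟨s.trans' (s.trans' hxa hab) (hmem b), fun _ => iff_of_false hxI hubNI⟩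
          · intro _
            rw [hvx]
            refine ⟨by rw [hxeqa]; exact lt_trans hlt hnb.1, ?_⟩
            rintro z ⟨hsz, hcondz⟩ hltz
            have hzNI : ¬(a < z ∧ z ≤ b) := fun h' => hxI ((hcondz hxa).mpr h')
            have hzb : b < z := by
              by_contra hzb'
              exact hzNI ⟨by rw [← hxeqa]; exact hltz, le_of_not_gt hzb'⟩
            exact hnb.2 z (s.trans' (s.symm' (s.trans' hxa hab)) hsz) hzb
          · intro hmaxx
            exact absurd hlty (not_lt.mpr (hmaxx y ⟨hsy, hcond⟩))
        · have hxnb : x ≠ b := fun h' => hxI (by rw [h']; exact ⟨hlt, le_rfl⟩)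
          have hvx : v x = u x := mul_swap_apply_ne u hxeqa hxnb
          have hnx := (h x).2.1 ⟨y, hsy, hlty⟩
          have huxNI : ¬(a < u x ∧ u x ≤ b) := by
            rcases hxAB with hxa2 | hbx
            · have hxlta : x < a := lt_of_le_of_ne hxa2 hxeqa
              have hua : u x ≤ a := hnx.2 a hxa hxlta
              exact fun h' => absurd (lt_of_lt_of_le h'.1 hua) (lt_irrefl a)
            · exact fun h' => absurd (lt_trans hbx hnx.1) (not_lt.mpr h'.2)
          refine ⟨?_, ?_, ?_⟩
          · rw [hvx]; exact ⟨hmem x, fun _ => iff_of_false hxI huxNI⟩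
          · intro _
            rw [hvx]
            exact ⟨hnx.1, fun z hz hltz => hnx.2 z hz.1 hltz⟩
          · intro hmaxx
            exact absurd hlty (not_lt.mpr (hmaxx y ⟨hsy, hcond⟩))
      · push_neg at hex
        have hmax' : ∀ y, spl s a b x y → y ≤ x := hex
        by_cases hxeqa : x = a
        · have hvx : v x = u b := by
            show (u * Equiv.swap a b) x = u b
            rw [hxeqa]
            exact mul_swap_apply_left u a b
          have hsxb : s x b := s.trans' hxa hab
          have hmaxb : ∀ z, s b z → z ≤ b := by
            intro z hz
            by_cases hzI : a < z ∧ z ≤ b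
            · exact hzI.2
            · have hsxz : s x z := s.trans' hsxb hz
              have hzx : z ≤ x := hmax' z ⟨hsxz, fun _ => iff_of_false hxI hzI⟩
              exact le_trans hzx (by rw [hxeqa]; exact le_of_lt hlt)
          have hminb := hminp b hmaxb
          have huba : u b ≤ a := by
            rw [← hxeqa]
            exact hminb x (s.symm' hsxb)
          refine ⟨?_, ?_, ?_⟩
          · rw [hvx]
            refine ⟨s.trans' hsxb (hmem b), fun _ => iff_of_false hxI ?_⟩
            exact fun h' => absurd (lt_of_lt_of_le h'.1 huba) (lt_irrefl a)
          · rintro ⟨y, hy, hlty⟩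
            exact absurd hlty (not_lt.mpr (hmax' y hy))
          · rintro _ y ⟨hsy, _⟩
            rw [hvx]
            exact hminb y (s.trans' (s.symm' hsxb) hsy)
        · have hbx : b < x := by
            rcases hxAB with hxa2 | hbx
            · exfalso
              have hxlta : x < a := lt_of_le_of_ne hxa2 hxeqa
              have : a ≤ x := hmax' a ⟨hxa, fun _ =>
                iff_of_false hxI (fun h' => lt_irrefl a h'.1)⟩
              exact absurd hxlta (not_lt.mpr this)
            · exact hbx
          have hxnb : x ≠ b := ne_of_gt hbx
          have hvx : v x = u x := mul_swap_apply_ne u hxeqa hxnb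
          have hmaxM : ∀ z, s x z → z ≤ x := by
            intro z hz
            by_cases hzI : a < z ∧ z ≤ b
            · exact le_of_lt (lt_of_le_of_lt hzI.2 hbx)
            · exact hmax' z ⟨hz, fun _ => iff_of_false hxI hzI⟩
          have hminM := hminp x hmaxM
          refine ⟨?_, ?_, ?_⟩
          · rw [hvx]
            refine ⟨hmem x, fun _ => iff_of_false hxI ?_⟩
            have hua : u x ≤ a := hminM a hxa
            exact fun h' => absurd (lt_of_lt_of_le h'.1 hua) (lt_irrefl a)
          · rintro ⟨y, hy, hlty⟩
            exact absurd hlty (not_lt.mpr (hmax' y hy))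
          · rintro _ y ⟨hsy, _⟩
            rw [hvx]
            exact hminM y hsy
  · -- x is not in the class of a : everything unchanged
    have hxa' : x ≠ a := fun h' => hxa (h' ▸ s.refl' a)
    have hxb' : x ≠ b := fun h' => hxa (h' ▸ s.symm' hab)
    have hvx : v x = u x := mul_swap_apply_ne u hxa' hxb'
    have hrel : ∀ y, spl s a b x y ↔ s x y :=
      fun y => ⟨And.left, fun hy => ⟨hy, fun h' => absurd h' hxa⟩⟩
    refine ⟨?_, ?_, ?_⟩
    · rw [hvx]; exact (hrel _).mpr (hmem x)
    · rintro ⟨y, hy, hlty⟩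
      have hh := (h x).2.1 ⟨y, (hrel y).mp hy, hlty⟩
      rw [hvx]
      exact ⟨hh.1, fun z hz hltz => hh.2 z ((hrel z).mp hz) hltz⟩
    · intro hmaxx y hy
      rw [hvx]
      exact hminp x (fun z hz => hmaxx z ((hrel z).mpr hz)) y ((hrel y).mp hy)

lemma core_noncrossing {s : Setoid (Fin n)} (hnc : IsNoncrossing s) (a b : Fin n) :
    IsNoncrossing (splS s a b) := by
  rintro a₁ b₁ c₁ d₁ h1 h2 h3 ⟨hac, hcond1⟩ ⟨hbd, hcond2⟩
  have hab1 : s a₁ b₁ := hnc _ _ _ _ h1 h2 h3 hac hbd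
  refine ⟨hab1, fun ha1a => ?_⟩
  have hb1a : s b₁ a := s.trans' (s.symm' hab1) ha1a
  have hiff1 := hcond1 ha1a
  have hiff2 := hcond2 hb1a
  constructor
  · intro hIa
    have hIc := hiff1.mp hIa
    exact ⟨lt_trans hIa.1 h1, le_trans (le_of_lt h2) hIc.2⟩
  · intro hIb
    by_contra hIa
    have hIc : ¬(a < c₁ ∧ c₁ ≤ b) := fun h' => hIa (hiff1.mpr h')
    have hId := hiff2.mp hIb
    exact hIc ⟨lt_trans hIb.1 h2, le_trans (le_of_lt h3) hId.2⟩

lemma core (u : Equiv.Perm (Fin n)) (hg : NCgood u) {a b : Fin n}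
    (hab : u.SameCycle a b) (hlt : a < b) :
    NCgood (u * Equiv.swap a b) ∧
      (∀ x y, (u * Equiv.swap a b).SameCycle x y ↔ spl (scs u) a b x y) ∧
      cyc (u * Equiv.swap a b) = cyc u + 1 := by
  have hpi : IsPiPerm (splS (scs u) a b) (u * Equiv.swap a b) := core_isPiPerm hg.2 hab hlt
  have hiff : ∀ x y, (u * Equiv.swap a b).SameCycle x y ↔ spl (scs u) a b x y :=
    sameCycle_iff_rel hpi
  have hscseq : scs (u * Equiv.swap a b) = splS (scs u) a b := scs_eq hpi
  have hncr : IsNoncrossing (splS (scs u) a b) := core_noncrossing hg.1 a b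
  refine ⟨⟨?_, ?_⟩, hiff, ?_⟩
  · rw [hscseq]; exact hncr
  · rw [hscseq]; exact hscseq ▸ hpi
  · have h1 : cyc (u * Equiv.swap a b) = ccount (spl (scs u) a b) := ccount_congr hiff
    rw [h1]
    exact ccount_spl (scs u) hab hlt

end NCAux


namespace NCAux
open Equiv Equiv.Perm

variable {n : ℕ}

lemma nc_le_iff {x y : NC n} : x ≤ y ↔ ∀ p q, x.val p q → y.val p q := by
  constructor
  · intro h p q hpq
    exact Setoid.le_def.mp h hpq
  · intro h
    exact Setoid.le_def.mpr (fun {p q} hpq => h p q hpq)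

lemma exists_merge_pair (σ τ : NC n) (hlt : σ < τ) :
    ∃ a b : Fin n, a < b ∧ ¬ σ.val a b ∧ τ.val a b ∧
      IsNoncrossing (mrgS σ.val a b) ∧
      (∀ x y, mrg σ.val a b x y → τ.val x y) := by
  classical
  have hle : ∀ p q, σ.val p q → τ.val p q := nc_le_iff.mp hlt.le
  set P : Set (Fin n × Fin n) := {p | p.1 < p.2 ∧ τ.val p.1 p.2 ∧ ¬ σ.val p.1 p.2} with hP
  have hPne : P.Nonempty := by
    by_contra hcon
    rw [Set.not_nonempty_iff_eq_empty] at hcon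
    have heq : σ = τ := by
      apply Subtype.ext
      apply Setoid.ext
      intro p q
      refine ⟨hle p q, fun hpq => ?_⟩
      by_contra hs
      rcases lt_trichotomy p q with h | h | h
      · have hmem : (p, q) ∈ P := ⟨h, hpq, hs⟩
        rw [hcon] at hmem
        exact hmem
      · exact hs (h ▸ σ.val.refl' p)
      · have hmem : (q, p) ∈ P := ⟨h, τ.val.symm' hpq, fun hs' => hs (σ.val.symm' hs')⟩
        rw [hcon] at hmem
        exact hmem
    exact hlt.ne heq
  obtain ⟨⟨a, b⟩, ⟨hab, hτab, hσab⟩, hmin⟩ :=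
    Set.exists_min_image P (fun p => p.2.val - p.1.val) (Set.toFinite P) hPne
  have K1 : ∀ z, τ.val a z → a < z → z < b → False := by
    intro z h1 h2 h3
    have hσaz : σ.val a z := by
      by_contra hc
      have hm := hmin (a, z) ⟨h2, h1, hc⟩
      simp only at hm
      have e1 := Fin.lt_def.mp h3
      have e2 := Fin.lt_def.mp h2
      have e3 := Fin.lt_def.mp hab
      omega
    have hσzb : σ.val z b := by
      by_contra hc
      have hτzb : τ.val z b := τ.val.trans' (τ.val.symm' h1) hτab
      have hm := hmin (z, b) ⟨h3, hτzb, hc⟩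
      simp only at hm
      have e1 := Fin.lt_def.mp h3
      have e2 := Fin.lt_def.mp h2
      omega
    exact hσab (σ.val.trans' hσaz hσzb)
  have hmle : ∀ x y, mrg σ.val a b x y → τ.val x y := by
    rintro x y (h | ⟨h1, h2⟩ | ⟨h1, h2⟩)
    · exact hle x y h
    · exact τ.val.trans' (hle _ _ h1) (τ.val.trans' hτab (hle _ _ h2))
    · exact τ.val.trans' (hle _ _ h1) (τ.val.trans' (τ.val.symm' hτab) (hle _ _ h2))
  refine ⟨a, b, hab, hσab, hτab, ?_, hmle⟩
  rintro p q r t h1 h2 h3 hpr hqt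
  have σnc := σ.2
  have hτpr : τ.val p r := hmle _ _ hpr
  have hτqt : τ.val q t := hmle _ _ hqt
  have hτpq : τ.val p q := τ.2 p q r t h1 h2 h3 hτpr hτqt
  rcases hpr with hspr | ⟨hp1, hp2⟩ | ⟨hp1, hp2⟩
  · -- p, r in a common σ-block C
    rcases hqt with hsqt | ⟨hq1, hq2⟩ | ⟨hq1, hq2⟩
    · exact Or.inl (σnc p q r t h1 h2 h3 hspr hsqt)
    · -- q ∈ A, t ∈ B
      by_cases hpA : σ.val p a
      · exact Or.inl (σ.val.trans' hpA (σ.val.symm' hq1))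
      · by_cases hpB : σ.val p b
        · exact Or.inr (Or.inr ⟨hpB, σ.val.symm' hq1⟩)
        · exfalso
          have hrA : ¬ σ.val r a := fun h => hpA (σ.val.trans' hspr h)
          have hrB : ¬ σ.val r b := fun h => hpB (σ.val.trans' hspr h)
          have hpa : p < a := by
            rcases lt_trichotomy a p with h | h | h
            · exact absurd (σ.val.symm' (σnc a p q r h h1 h2 (σ.val.symm' hq1) hspr)) hpA
            · exfalso; subst h; exact hpA (σ.val.refl' _)
            · exact h
          have har : a < r := by
            rcases lt_trichotomy r a with h | h | h
            · exact absurd (σ.val.trans' (σnc p q r a h1 h2 h hspr hq1) hq1) hpA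
            · exfalso; subst h; exact hrA (σ.val.refl' _)
            · exact h
          have hbr : r < b := by
            rcases lt_trichotomy b r with h | h | h
            · exact absurd (σnc p b r t (lt_trans hpa hab) h h3 hspr hq2) hpB
            · exfalso; subst h; exact hrB (σ.val.refl' _)
            · exact h
          have hτar : τ.val a r :=
            τ.val.trans' (τ.val.symm' (hle _ _ hq1)) (τ.val.trans' (τ.val.symm' hτpq) hτpr)
          exact K1 r hτar har hbr
    · -- q ∈ B, t ∈ A
      by_cases hpB : σ.val p b
      · exact Or.inl (σ.val.trans' hpB (σ.val.symm' hq1))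
      · by_cases hpA : σ.val p a
        · exact Or.inr (Or.inl ⟨hpA, σ.val.symm' hq1⟩)
        · exfalso
          have hrA : ¬ σ.val r a := fun h => hpA (σ.val.trans' hspr h)
          have hrB : ¬ σ.val r b := fun h => hpB (σ.val.trans' hspr h)
          have hpb : p < b := by
            rcases lt_trichotomy b p with h | h | h
            · exact absurd (σ.val.symm' (σnc b p q r h h1 h2 (σ.val.symm' hq1) hspr)) hpB
            · exfalso; subst h; exact hpB (σ.val.refl' _)
            · exact h
          have hbr : b < r := by
            rcases lt_trichotomy r b with h | h | h
            · exact absurd (σ.val.trans' (σnc p q r b h1 h2 h hspr hq1) hq1) hpB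
            · exfalso; subst h; exact hrB (σ.val.refl' _)
            · exact h
          have hap : a < p := by
            rcases lt_trichotomy a p with h | h | h
            · exact h
            · exfalso; subst h; exact hpA (σ.val.refl' _)
            · rcases lt_trichotomy a r with h' | h' | h'
              · exact absurd (σnc p a r t h h' h3 hspr hq2) hpA
              · exfalso; subst h'; exact hrA (σ.val.refl' _)
              · exact absurd (lt_trans hab (lt_trans hbr h')) (lt_irrefl a)
          have hτap : τ.val a p :=
            τ.val.trans' (hle _ _ hq2)
              (τ.val.trans' (τ.val.symm' hτqt) (τ.val.symm' hτpq))
          exact K1 p hτap hap hpb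
  · -- p ∈ A, r ∈ B
    rcases hqt with hsqt | ⟨hq1, hq2⟩ | ⟨hq1, hq2⟩
    · -- q, t in a common σ-block E
      by_cases hqA : σ.val q a
      · exact Or.inl (σ.val.trans' hp1 (σ.val.symm' hqA))
      · by_cases hqB : σ.val q b
        · exact Or.inr (Or.inl ⟨hp1, σ.val.symm' hqB⟩)
        · exfalso
          have htA : ¬ σ.val t a := fun h => hqA (σ.val.trans' hsqt h)
          have htB : ¬ σ.val t b := fun h => hqB (σ.val.trans' hsqt h)
          have hqb : q < b := by
            rcases lt_trichotomy b q with h | h | h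
            · exact absurd (σ.val.symm' (σnc b q r t h h2 h3 hp2 hsqt)) hqB
            · exfalso; subst h; exact hqB (σ.val.refl' _)
            · exact h
          have hbt : b < t := by
            rcases lt_trichotomy t b with h | h | h
            · exact absurd (σ.val.trans' (σnc q r t b h2 h3 h hsqt (σ.val.symm' hp2)) (σ.val.symm' hp2)) hqB
            · exfalso; subst h; exact htB (σ.val.refl' _)
            · exact h
          have haq : a < q := by
            rcases lt_trichotomy a q with h | h | h
            · exact h
            · exfalso; subst h; exact hqA (σ.val.refl' _)
            · rcases lt_trichotomy a t with h' | h' | h'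
              · exact absurd (σ.val.trans' (σ.val.symm' (σnc p q a t h1 h h' hp1 hsqt)) hp1) hqA
              · exfalso; subst h'; exact htA (σ.val.refl' _)
              · exact absurd (lt_trans hab (lt_trans hbt h')) (lt_irrefl a)
          have hτaq : τ.val a q := τ.val.trans' (τ.val.symm' (hle _ _ hp1)) hτpq
          exact K1 q hτaq haq hqb
    · exact Or.inl (σ.val.trans' hp1 (σ.val.symm' hq1))
    · exact Or.inr (Or.inl ⟨hp1, σ.val.symm' hq1⟩)
  · -- p ∈ B, r ∈ A
    rcases hqt with hsqt | ⟨hq1, hq2⟩ | ⟨hq1, hq2⟩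
    · by_cases hqB : σ.val q b
      · exact Or.inl (σ.val.trans' hp1 (σ.val.symm' hqB))
      · by_cases hqA : σ.val q a
        · exact Or.inr (Or.inr ⟨hp1, σ.val.symm' hqA⟩)
        · exfalso
          have htA : ¬ σ.val t a := fun h => hqA (σ.val.trans' hsqt h)
          have htB : ¬ σ.val t b := fun h => hqB (σ.val.trans' hsqt h)
          have hqa : q < a := by
            rcases lt_trichotomy a q with h | h | h
            · exact absurd (σ.val.symm' (σnc a q r t h h2 h3 hp2 hsqt)) hqA
            · exfalso; subst h; exact hqA (σ.val.refl' _)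
            · exact h
          have hat : a < t := by
            rcases lt_trichotomy t a with h | h | h
            · exact absurd (σ.val.trans' (σnc q r t a h2 h3 h hsqt (σ.val.symm' hp2)) (σ.val.symm' hp2)) hqA
            · exfalso; subst h; exact htA (σ.val.refl' _)
            · exact h
          have htb : t < b := by
            rcases lt_trichotomy b t with h | h | h
            · rcases lt_trichotomy q b with h' | h' | h'
              · exact absurd (σ.val.trans' (σ.val.symm' (σnc p q b t h1 h' h hp1 hsqt)) hp1) hqB
              · exfalso; subst h'; exact hqB (σ.val.refl' _)
              · exact absurd (lt_trans hqa (lt_trans hab h')) (lt_irrefl q)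
            · exfalso; subst h; exact htB (σ.val.refl' _)
            · exact h
          have hτat : τ.val a t :=
            τ.val.trans' (hle _ _ hp2)
              (τ.val.trans' (τ.val.symm' hτpr) (τ.val.trans' hτpq hτqt))
          exact K1 t hτat hat htb
    · exact Or.inr (Or.inr ⟨hp1, σ.val.symm' hq1⟩)
    · exact Or.inl (σ.val.trans' hp1 (σ.val.symm' hq1))

end NCAux


namespace NCAux
open Equiv Equiv.Perm

variable {n : ℕ}

lemma split_pair_aux (σ τ : NC n) (a b : Fin n) (hab : ¬ σ.val a b)
    (hτ : ∀ x y, τ.val x y ↔ mrg σ.val a b x y)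
    (m0 : Fin n) (hm0τ : τ.val m0 a) (hm0min : ∀ z, τ.val z a → m0 ≤ z)
    (hm0A : σ.val m0 a) :
    ∃ a' b', a' < b' ∧ τ.val a' b' ∧ (∀ x y, σ.val x y ↔ spl τ.val a' b' x y) := by
  classical
  have hτab : τ.val a b := (hτ a b).mpr (Or.inr (Or.inl ⟨σ.val.refl' a, σ.val.refl' b⟩))
  have hle : ∀ x y, σ.val x y → τ.val x y := fun x y h => (hτ x y).mpr (Or.inl h)
  obtain ⟨mB, hmBmem0, hmBmin0⟩ :=
    Set.exists_min_image {z | σ.val z b} id (Set.toFinite _) ⟨b, σ.val.refl' b⟩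
  obtain ⟨b', hb'mem0, hb'max0⟩ :=
    Set.exists_max_image {z | σ.val z b} id (Set.toFinite _) ⟨b, σ.val.refl' b⟩
  have hmBmem : σ.val mB b := hmBmem0
  have hb'mem : σ.val b' b := hb'mem0
  have hmBmin : ∀ z, σ.val z b → mB ≤ z := fun z hz => hmBmin0 z hz
  have hb'max : ∀ z, σ.val z b → z ≤ b' := fun z hz => hb'max0 z hz
  have hm0mB : m0 < mB := by
    have h1 : m0 ≤ mB :=
      hm0min mB (τ.val.trans' (hle _ _ hmBmem) (τ.val.symm' hτab))
    have hne : m0 ≠ mB := fun h => hab (σ.val.trans' (σ.val.symm' hm0A) (by rw [h]; exact hmBmem))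
    exact lt_of_le_of_ne h1 hne
  obtain ⟨a', ha'mem0, ha'max0⟩ :=
    Set.exists_max_image {z | τ.val z a ∧ z < mB} id (Set.toFinite _) ⟨m0, hm0τ, hm0mB⟩
  have ha'τ : τ.val a' a := ha'mem0.1
  have ha'lt : a' < mB := ha'mem0.2
  have ha'max : ∀ z, τ.val z a → z < mB → z ≤ a' := fun z h1 h2 => ha'max0 z ⟨h1, h2⟩
  have ha'A : σ.val a' a := by
    rcases (hτ a' a).mp ha'τ with h | ⟨h1, _⟩ | ⟨h1, _⟩
    · exact h
    · exact h1
    · exact absurd (hmBmin a' h1) (not_le.mpr ha'lt)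
  have ha'b' : a' < b' := lt_of_lt_of_le ha'lt (hmBmin b' hb'mem)
  have hτa'b' : τ.val a' b' :=
    τ.val.trans' ha'τ (τ.val.trans' hτab (τ.val.symm' (hle _ _ hb'mem)))
  have hc4 : ∀ z, τ.val z a → ((a' < z ∧ z ≤ b') ↔ σ.val z b) := by
    intro z hz
    constructor
    · rintro ⟨hz1, hz2⟩
      by_contra hzB
      have hzA : σ.val z a := by
        rcases (hτ z a).mp hz with h | ⟨h1, _⟩ | ⟨h1, _⟩
        · exact h
        · exact h1
        · exact absurd h1 hzB
      have hmBz : mB < z := by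
        rcases lt_trichotomy z mB with h | h | h
        · exact absurd (ha'max z hz h) (not_le.mpr hz1)
        · exact absurd (by rw [h]; exact hmBmem) hzB
        · exact h
      have hzb' : z < b' := lt_of_le_of_ne hz2 (fun h => hzB (by rw [h]; exact hb'mem))
      have hm0z : σ.val m0 z := σ.val.trans' hm0A (σ.val.symm' hzA)
      have hmBb' : σ.val mB b' := σ.val.trans' hmBmem (σ.val.symm' hb'mem)
      have hcross := σ.2 m0 mB z b' hm0mB hmBz hzb' hm0z hmBb'
      exact hab (σ.val.trans' (σ.val.symm' hm0A) (σ.val.trans' hcross hmBmem))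
    · intro hzB
      exact ⟨lt_of_lt_of_le ha'lt (hmBmin z hzB), hb'max z hzB⟩
  refine ⟨a', b', ha'b', hτa'b', ?_⟩
  intro x y
  constructor
  · intro hxy
    refine ⟨hle _ _ hxy, fun hxa' => ?_⟩
    have hxa : τ.val x a := τ.val.trans' hxa' ha'τ
    have hya : τ.val y a := τ.val.trans' (τ.val.symm' (hle _ _ hxy)) hxa
    rw [hc4 x hxa, hc4 y hya]
    exact ⟨fun h => σ.val.trans' (σ.val.symm' hxy) h, fun h => σ.val.trans' hxy h⟩
  · rintro ⟨hτxy, hcond⟩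
    by_cases hxa : τ.val x a
    · have hya : τ.val y a := τ.val.trans' (τ.val.symm' hτxy) hxa
      have hxa' : τ.val x a' := τ.val.trans' hxa (τ.val.symm' ha'τ)
      have hiff : σ.val x b ↔ σ.val y b := by
        rw [← hc4 x hxa, ← hc4 y hya]
        exact hcond hxa'
      rcases (hτ x y).mp hτxy with h | ⟨h1, h2⟩ | ⟨h1, h2⟩
      · exact h
      · exfalso
        have hxB : ¬ σ.val x b := fun h' => hab (σ.val.trans' (σ.val.symm' h1) h')
        exact hxB (hiff.mpr (σ.val.symm' h2))
      · exfalso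
        have hyB : ¬ σ.val y b := fun h' => hab (σ.val.trans' h2 h')
        exact hyB (hiff.mp h1)
    · rcases (hτ x y).mp hτxy with h | ⟨h1, _⟩ | ⟨h1, _⟩
      · exact h
      · exact absurd (hle _ _ h1) hxa
      · exact absurd (τ.val.trans' (hle _ _ h1) (τ.val.symm' hτab)) hxa

lemma split_pair (σ τ : NC n) (a b : Fin n) (hab : ¬ σ.val a b)
    (hτ : ∀ x y, τ.val x y ↔ mrg σ.val a b x y) :
    ∃ a' b', a' < b' ∧ τ.val a' b' ∧ (∀ x y, σ.val x y ↔ spl τ.val a' b' x y) := by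
  obtain ⟨m0, hm0mem, hm0min0⟩ :=
    Set.exists_min_image {z | τ.val z a} id (Set.toFinite _) ⟨a, τ.val.refl' a⟩
  have hm0τ : τ.val m0 a := hm0mem
  have hm0min : ∀ z, τ.val z a → m0 ≤ z := fun z hz => hm0min0 z hz
  have hm0AB : σ.val m0 a ∨ σ.val m0 b := by
    rcases (hτ m0 a).mp hm0τ with h | ⟨h1, _⟩ | ⟨h1, _⟩
    · exact Or.inl h
    · exact Or.inl h1
    · exact Or.inr h1
  rcases hm0AB with h | h
  · exact split_pair_aux σ τ a b hab hτ m0 hm0τ hm0min h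
  · have hab' : ¬ σ.val b a := fun h' => hab (σ.val.symm' h')
    have hτ' : ∀ x y, τ.val x y ↔ mrg σ.val b a x y :=
      fun x y => (hτ x y).trans (mrg_comm σ.val a b x y)
    have hτab : τ.val a b := (hτ a b).mpr (Or.inr (Or.inl ⟨σ.val.refl' a, σ.val.refl' b⟩))
    have hm0τ' : τ.val m0 b := τ.val.trans' hm0τ hτab
    have hm0min' : ∀ z, τ.val z b → m0 ≤ z :=
      fun z hz => hm0min z (τ.val.trans' hz (τ.val.symm' hτab))
    exact split_pair_aux σ τ b a hab' hτ' m0 hm0τ' hm0min' h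

end NCAux


namespace NCAux
open Equiv Equiv.Perm

variable {n : ℕ} {π : NC n → Equiv.Perm (Fin n)}

lemma ncgood_pi (hπ : ∀ σ : NC n, IsPiPerm σ.val (π σ)) (σ : NC n) : NCgood (π σ) := by
  constructor
  · rw [scs_eq (hπ σ)]; exact σ.2
  · rw [scs_eq (hπ σ)]; exact hπ σ

lemma pi_injective (hπ : ∀ σ : NC n, IsPiPerm σ.val (π σ)) {x y : NC n}
    (h : π x = π y) : x = y := by
  apply Subtype.ext
  apply Setoid.ext
  intro p q
  rw [← sameCycle_iff_rel (hπ x) p q, h, sameCycle_iff_rel (hπ y) p q]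

lemma spl_congr {s s' : Setoid (Fin n)} (h : ∀ x y, s x y ↔ s' x y) (a b x y : Fin n) :
    spl s a b x y ↔ spl s' a b x y := by
  unfold spl
  rw [h x y, h x a]

lemma merge_perm (hπ : ∀ σ : NC n, IsPiPerm σ.val (π σ)) (σ τ' : NC n) (a b : Fin n)
    (hab : ¬ σ.val a b) (hτ : ∀ x y, τ'.val x y ↔ mrg σ.val a b x y) :
    ∃ a' b', a' < b' ∧ τ'.val a' b' ∧ π σ = π τ' * Equiv.swap a' b' ∧
      cyc (π σ) = cyc (π τ') + 1 ∧ (∀ x y, σ.val x y ↔ spl τ'.val a' b' x y) := by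
  obtain ⟨a', b', hlt, hτa'b', hrel⟩ := split_pair σ τ' a b hab hτ
  have hg := ncgood_pi hπ τ'
  have hsc : (π τ').SameCycle a' b' := (sameCycle_iff_rel (hπ τ') a' b').mpr hτa'b'
  obtain ⟨hg2, hiff, hcyc⟩ := core (π τ') hg hsc hlt
  have h1 : ∀ x y, (π τ' * Equiv.swap a' b').SameCycle x y ↔ σ.val x y := fun x y =>
    (hiff x y).trans
      ((spl_congr (fun p q => sameCycle_iff_rel (hπ τ') p q) a' b' x y).trans (hrel x y).symm)
  have e : scs (π τ' * Equiv.swap a' b') = σ.val := Setoid.ext h1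
  have hpi2 : IsPiPerm σ.val (π τ' * Equiv.swap a' b') := by rw [← e]; exact hg2.2
  have heq : π σ = π τ' * Equiv.swap a' b' := piPerm_unique (hπ σ) hpi2
  exact ⟨a', b', hlt, hτa'b', heq, by rw [heq]; exact hcyc, hrel⟩

lemma cover_perm (hπ : ∀ σ : NC n, IsPiPerm σ.val (π σ)) {σ τ : NC n} (hcov : σ ⋖ τ) :
    ∃ a' b', a' < b' ∧ τ.val a' b' ∧ π σ = π τ * Equiv.swap a' b' ∧
      cyc (π σ) = cyc (π τ) + 1 ∧ (∀ x y, σ.val x y ↔ spl τ.val a' b' x y) := by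
  obtain ⟨a, b, hab, hσab, hτab, hnc, hmle⟩ := exists_merge_pair σ τ hcov.lt
  set σ' : NC n := ⟨mrgS σ.val a b, hnc⟩ with hσ'def
  have hlt1 : σ < σ' := by
    refine lt_of_le_of_ne (nc_le_iff.mpr (fun p q h => Or.inl h)) ?_
    intro heq
    apply hσab
    have hm : σ'.val a b := Or.inr (Or.inl ⟨σ.val.refl' a, σ.val.refl' b⟩)
    rw [← heq] at hm
    exact hm
  have hle2 : σ' ≤ τ := nc_le_iff.mpr hmle
  have heqτ : σ' = τ := by
    by_contra hne
    exact hcov.2 hlt1 (lt_of_le_of_ne hle2 hne)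
  obtain ⟨a', b', hlt', hτ'ab, heq', hcyc', hrel⟩ :=
    merge_perm hπ σ σ' a b hσab (fun x y => Iff.rfl)
  rw [heqτ] at hτ'ab heq' hcyc' hrel
  exact ⟨a', b', hlt', hτ'ab, heq', hcyc', hrel⟩

lemma chain_exists (hπ : ∀ σ : NC n, IsPiPerm σ.val (π σ)) (σ₀ τ : NC n) (hle0 : σ₀ ≤ τ) :
    ∃ L : List (Equiv.Perm (Fin n)), (∀ t ∈ L, ∃ a b : Fin n, a ≠ b ∧ t = Equiv.swap a b) ∧
      π τ = π σ₀ * L.prod ∧ cyc (π σ₀) = cyc (π τ) + L.length := by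
  suffices H : ∀ (N : ℕ) (σ : NC n), cyc (π σ) ≤ N → σ ≤ τ →
      ∃ L : List (Equiv.Perm (Fin n)), (∀ t ∈ L, ∃ a b : Fin n, a ≠ b ∧ t = Equiv.swap a b) ∧
        π τ = π σ * L.prod ∧ cyc (π σ) = cyc (π τ) + L.length by
    exact H (cyc (π σ₀)) σ₀ le_rfl hle0
  intro N
  induction N with
  | zero =>
    intro σ hN hle
    by_cases heq : σ = τ
    · subst heq
      exact ⟨[], by simp, by simp, by simp⟩
    · exfalso
      obtain ⟨a, b, hab, hσab, hτab, hnc, hmle⟩ :=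
        exists_merge_pair σ τ (lt_of_le_of_ne hle heq)
      obtain ⟨a', b', _, _, _, hcyc', _⟩ :=
        merge_perm hπ σ ⟨mrgS σ.val a b, hnc⟩ a b hσab (fun x y => Iff.rfl)
      omega
  | succ N ih =>
    intro σ hN hle
    by_cases heq : σ = τ
    · subst heq
      exact ⟨[], by simp, by simp, by simp⟩
    · obtain ⟨a, b, hab, hσab, hτab, hnc, hmle⟩ :=
        exists_merge_pair σ τ (lt_of_le_of_ne hle heq)
      set σ' : NC n := ⟨mrgS σ.val a b, hnc⟩ with hσ'def
      obtain ⟨a', b', hlt', _, heq', hcyc', _⟩ :=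
        merge_perm hπ σ σ' a b hσab (fun x y => Iff.rfl)
      have hσ'le : σ' ≤ τ := nc_le_iff.mpr hmle
      obtain ⟨L', hL'1, hL'2, hL'3⟩ := ih σ' (by omega) hσ'le
      refine ⟨Equiv.swap a' b' :: L', ?_, ?_, ?_⟩
      · intro t ht
        rcases List.mem_cons.mp ht with rfl | ht'
        · exact ⟨a', b', ne_of_lt hlt', rfl⟩
        · exact hL'1 t ht'
      · rw [List.prod_cons, ← mul_assoc]
        have hmid : π σ * Equiv.swap a' b' = π σ' := by
          rw [heq', mul_swap_mul_self]
        rw [hmid]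
        exact hL'2
      · simp only [List.length_cons]
        omega

lemma conj_swap (g : Equiv.Perm (Fin n)) (a b : Fin n) :
    g * Equiv.swap a b * g⁻¹ = Equiv.swap (g a) (g b) := by
  rw [mul_swap_eq_swap_mul, mul_inv_cancel_right]

lemma swap_list_bound_left :
    ∀ (L : List (Equiv.Perm (Fin n))), (∀ t ∈ L, ∃ a b : Fin n, a ≠ b ∧ t = Equiv.swap a b) →
    ∀ h : Equiv.Perm (Fin n),
      cyc h ≤ cyc (L.prod * h) + L.length ∧ cyc (L.prod * h) ≤ cyc h + L.length := by
  intro L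
  induction L with
  | nil => intro _ h; simp
  | cons s L' ih =>
    intro hL h
    obtain ⟨a, b, hne, hseq⟩ := hL s List.mem_cons_self
    have step : ∀ x : Equiv.Perm (Fin n),
        cyc x ≤ cyc (s * x) + 1 ∧ cyc (s * x) ≤ cyc x + 1 := by
      intro x
      have hrw : s * x = x * Equiv.swap (x⁻¹ a) (x⁻¹ b) := by
        rw [hseq, mul_swap_eq_swap_mul]
        simp
      have hne' : x⁻¹ a ≠ x⁻¹ b := fun hh => hne (by
        have := congrArg x hh
        simpa using this)
      have hb := cyc_mul_swap_bounds (u := x) hne'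
      rw [hrw]
      exact ⟨hb.2, hb.1⟩
    have hih := ih (fun t ht => hL t (List.mem_cons_of_mem _ ht)) h
    have hstep := step (L'.prod * h)
    rw [List.prod_cons, mul_assoc]
    simp only [List.length_cons]
    omega

lemma swap_list_bound_right :
    ∀ (L : List (Equiv.Perm (Fin n))), (∀ t ∈ L, ∃ a b : Fin n, a ≠ b ∧ t = Equiv.swap a b) →
    ∀ h : Equiv.Perm (Fin n),
      cyc h ≤ cyc (h * L.prod) + L.length ∧ cyc (h * L.prod) ≤ cyc h + L.length := by
  intro L
  induction L with
  | nil => intro _ h; simp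
  | cons s L' ih =>
    intro hL h
    obtain ⟨a, b, hne, hseq⟩ := hL s List.mem_cons_self
    have hb : cyc (h * s) ≤ cyc h + 1 ∧ cyc h ≤ cyc (h * s) + 1 := by
      rw [hseq]
      exact cyc_mul_swap_bounds hne
    have hih := ih (fun t ht => hL t (List.mem_cons_of_mem _ ht)) (h * s)
    rw [List.prod_cons, ← mul_assoc]
    simp only [List.length_cons]
    omega

lemma conj_list_prod (g : Equiv.Perm (Fin n)) :
    ∀ L : List (Equiv.Perm (Fin n)),
      (L.map (fun s => g * s * g⁻¹)).prod = g * L.prod * g⁻¹ := by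
  intro L
  induction L with
  | nil => simp
  | cons s L' ih =>
    simp only [List.map_cons, List.prod_cons, ih]
    group

lemma conj_list_swaps (g : Equiv.Perm (Fin n)) (L : List (Equiv.Perm (Fin n)))
    (h : ∀ t ∈ L, ∃ a b : Fin n, a ≠ b ∧ t = Equiv.swap a b) :
    ∀ t ∈ L.map (fun s => g * s * g⁻¹), ∃ a b : Fin n, a ≠ b ∧ t = Equiv.swap a b := by
  intro t ht
  obtain ⟨s, hs, rfl⟩ := List.mem_map.mp ht
  obtain ⟨a, b, hne, rfl⟩ := h s hs
  exact ⟨g a, g b, fun hh => hne (g.injective hh), conj_swap g a b⟩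

lemma swap_list_inv (L : List (Equiv.Perm (Fin n)))
    (h : ∀ t ∈ L, ∃ a b : Fin n, a ≠ b ∧ t = Equiv.swap a b) :
    L.prod⁻¹ = L.reverse.prod := by
  induction L with
  | nil => simp
  | cons s L' ih =>
    obtain ⟨a, b, _, hseq⟩ := h s List.mem_cons_self
    have ih' := ih (fun t ht => h t (List.mem_cons_of_mem _ ht))
    rw [List.prod_cons, mul_inv_rev, ih', List.reverse_cons, List.prod_append,
      List.prod_cons, List.prod_nil, mul_one, hseq, Equiv.swap_inv]

lemma swap_list_reverse (L : List (Equiv.Perm (Fin n)))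
    (h : ∀ t ∈ L, ∃ a b : Fin n, a ≠ b ∧ t = Equiv.swap a b) :
    ∀ t ∈ L.reverse, ∃ a b : Fin n, a ≠ b ∧ t = Equiv.swap a b := by
  intro t ht
  exact h t (List.mem_reverse.mp ht)

end NCAux


namespace NCAux
open Equiv Equiv.Perm

variable {n : ℕ} {π : NC n → Equiv.Perm (Fin n)}

def topNC (n : ℕ) : NC n :=
  ⟨⟨fun _ _ => True, ⟨fun _ => trivial, fun _ => trivial, fun _ _ => trivial⟩⟩,
    fun _ _ _ _ _ _ _ _ _ => trivial⟩

lemma cyc_top (hπ : ∀ σ : NC n, IsPiPerm σ.val (π σ)) (hn : 0 < n) :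
    cyc (π (topNC n)) = 1 := by
  have h1 : cyc (π (topNC n)) = ccount (⇑(topNC n).val) :=
    ccount_congr (fun x y => sameCycle_iff_rel (hπ (topNC n)) x y)
  rw [h1]
  have h2 : minset (⇑(topNC n).val) = {(⟨0, hn⟩ : Fin n)} := by
    ext x
    simp only [minset, Set.mem_setOf_eq, Set.mem_singleton_iff]
    constructor
    · intro hx
      have h3 : x ≤ ⟨0, hn⟩ := hx _ trivial
      have h4 : (⟨0, hn⟩ : Fin n) ≤ x := by
        rw [Fin.le_def]
        exact Nat.zero_le _
      exact le_antisymm h3 h4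
    · rintro rfl y _
      rw [Fin.le_def]
      exact Nat.zero_le _
  unfold ccount
  rw [h2, Set.ncard_singleton]

lemma ncgood_of_word (hπ : ∀ σ : NC n, IsPiPerm σ.val (π σ)) (hn : 0 < n) :
    ∀ (L : List (Equiv.Perm (Fin n))) (u : Equiv.Perm (Fin n)),
      (∀ t ∈ L, ∃ a b : Fin n, a ≠ b ∧ t = Equiv.swap a b) →
      u * L.prod = π (topNC n) → cyc u = 1 + L.length → NCgood u := by
  intro L
  induction L with
  | nil =>
    intro u _ hword _
    have hu : u = π (topNC n) := by simpa using hword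
    rw [hu]
    exact ncgood_pi hπ (topNC n)
  | cons s L' ih =>
    intro u hL hword hcyc
    obtain ⟨a, b, hne, hseq⟩ := hL s List.mem_cons_self
    set p := u * s with hp
    have hword' : p * L'.prod = π (topNC n) := by
      rw [hp, mul_assoc]
      rw [List.prod_cons] at hword
      exact hword
    have hupper : cyc p ≤ 1 + L'.length := by
      have hb := (swap_list_bound_right L' (fun t ht => hL t (List.mem_cons_of_mem _ ht)) p).1
      rw [hword'] at hb
      have hctop : cyc (π (topNC n)) = 1 := cyc_top hπ hn
      omega
    have hnotsc : ¬ u.SameCycle a b := by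
      intro hsc
      have hh := cyc_mul_swap_same hsc hne
      rw [← hseq, ← hp] at hh
      simp only [List.length_cons] at hcyc
      omega
    have hcycp : cyc p + 1 = cyc u := by
      have hh := cyc_mul_swap_not hnotsc
      rw [← hseq, ← hp] at hh
      exact hh
    have hgp : NCgood p := by
      apply ih p (fun t ht => hL t (List.mem_cons_of_mem _ ht)) hword'
      simp only [List.length_cons] at hcyc
      omega
    have hscp : p.SameCycle a b := by
      have hh := sameCycle_mul_swap_self hnotsc
      rw [← hseq, ← hp] at hh
      exact hh
    have hueq : u = p * s := by
      rw [hp, mul_assoc, hseq, Equiv.swap_mul_self, mul_one]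
    rcases lt_or_gt_of_ne hne with hlt | hlt
    · have hc := (core p hgp hscp hlt).1
      rw [hueq, hseq]
      exact hc
    · have hc := (core p hgp hscp.symm hlt).1
      rw [hueq, hseq, Equiv.swap_comm]
      exact hc

lemma cov_of_spl {x y : NC n} {a b : Fin n} (hlt : a < b) (hab : y.val a b)
    (hrel : ∀ p q, x.val p q ↔ spl y.val a b p q) : x ⋖ y := by
  have hxy : x ≤ y := nc_le_iff.mpr (fun p q h => ((hrel p q).mp h).1)
  have hnotab : ¬ x.val a b := by
    intro h
    exact absurd ((((hrel a b).mp h).2 (y.val.refl' a)).mpr ⟨hlt, le_rfl⟩).1 (lt_irrefl a)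
  have hmerge : ∀ p q, y.val p q → mrg x.val a b p q := by
    intro p q hpq
    by_cases hpa : y.val p a
    · have hqa : y.val q a := y.val.trans' (y.val.symm' hpq) hpa
      by_cases hpI : a < p ∧ p ≤ b
      · by_cases hqI : a < q ∧ q ≤ b
        · exact Or.inl ((hrel p q).mpr ⟨hpq, fun _ => iff_of_true hpI hqI⟩)
        · refine Or.inr (Or.inr ⟨?_, ?_⟩)
          · exact (hrel p b).mpr ⟨y.val.trans' hpa hab, fun _ => iff_of_true hpI ⟨hlt, le_rfl⟩⟩
          · exact (hrel a q).mpr ⟨y.val.symm' hqa,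
              fun _ => iff_of_false (fun h => lt_irrefl a h.1) hqI⟩
      · by_cases hqI : a < q ∧ q ≤ b
        · refine Or.inr (Or.inl ⟨?_, ?_⟩)
          · exact (hrel p a).mpr ⟨hpa, fun _ => iff_of_false hpI (fun h => lt_irrefl a h.1)⟩
          · exact (hrel b q).mpr ⟨y.val.trans' (y.val.symm' hab) (y.val.symm' hqa),
              fun _ => iff_of_true ⟨hlt, le_rfl⟩ hqI⟩
        · exact Or.inl ((hrel p q).mpr ⟨hpq, fun _ => iff_of_false hpI hqI⟩)
    · exact Or.inl ((hrel p q).mpr ⟨hpq, fun h => absurd h hpa⟩)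
  have hxlty : x < y := lt_of_le_of_ne hxy (fun h => hnotab (by rw [h]; exact hab))
  constructor
  · exact hxlty
  · intro z hxz hzy
    have hzley : z ≤ y := hzy.le
    have hxlez : x ≤ z := hxz.le
    obtain ⟨p, q, hzpq, hxpq⟩ : ∃ p q, z.val p q ∧ ¬ x.val p q := by
      by_contra hcon
      push_neg at hcon
      exact absurd (le_antisymm (nc_le_iff.mpr hcon) hxlez) hxz.ne'
    have hzab : z.val a b := by
      have hypq : y.val p q := nc_le_iff.mp hzley p q hzpq
      have hfail : ¬ spl y.val a b p q := fun h => hxpq ((hrel p q).mpr h)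
      have hpa : y.val p a := by
        by_contra hpa
        exact hfail ⟨hypq, fun h => absurd h hpa⟩
      have hcondfail : ¬ ((a < p ∧ p ≤ b) ↔ (a < q ∧ q ≤ b)) :=
        fun h => hfail ⟨hypq, fun _ => h⟩
      by_cases hpI : a < p ∧ p ≤ b
      · have hqI : ¬ (a < q ∧ q ≤ b) := fun h => hcondfail (iff_of_true hpI h)
        have h1 : x.val p b :=
          (hrel p b).mpr ⟨y.val.trans' hpa hab, fun _ => iff_of_true hpI ⟨hlt, le_rfl⟩⟩
        have h2 : x.val a q :=
          (hrel a q).mpr ⟨y.val.trans' (y.val.symm' hpa) hypq,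
            fun _ => iff_of_false (fun h => lt_irrefl a h.1) hqI⟩
        have hz1 : z.val a q := nc_le_iff.mp hxlez a q h2
        have hz2 : z.val p b := nc_le_iff.mp hxlez p b h1
        exact z.val.trans' hz1 (z.val.trans' (z.val.symm' hzpq) hz2)
      · have hqI : a < q ∧ q ≤ b := by
          by_contra hqI
          exact hcondfail (iff_of_false hpI hqI)
        have h1 : x.val p a :=
          (hrel p a).mpr ⟨hpa, fun _ => iff_of_false hpI (fun h => lt_irrefl a h.1)⟩
        have h2 : x.val b q :=
          (hrel b q).mpr ⟨y.val.trans' (y.val.symm' hab) (y.val.trans' (y.val.symm' hpa) hypq),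
            fun _ => iff_of_true ⟨hlt, le_rfl⟩ hqI⟩
        have hz1 : z.val p a := nc_le_iff.mp hxlez p a h1
        have hz2 : z.val b q := nc_le_iff.mp hxlez b q h2
        exact z.val.trans' (z.val.symm' hz1) (z.val.trans' hzpq (z.val.symm' hz2))
    have hylez : y ≤ z := by
      apply nc_le_iff.mpr
      intro p' q' hpq'
      rcases hmerge p' q' hpq' with h | ⟨h1, h2⟩ | ⟨h1, h2⟩
      · exact nc_le_iff.mp hxlez p' q' h
      · exact z.val.trans' (nc_le_iff.mp hxlez p' a h1)
          (z.val.trans' hzab (nc_le_iff.mp hxlez b q' h2))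
      · exact z.val.trans' (nc_le_iff.mp hxlez p' b h1)
          (z.val.trans' (z.val.symm' hzab) (nc_le_iff.mp hxlez a q' h2))
    exact absurd hylez hzy.2

lemma transport (hπ : ∀ σ : NC n, IsPiPerm σ.val (π σ)) (k : ℕ)
    (u : ℕ → Equiv.Perm (Fin n)) (t : ℕ → Equiv.Perm (Fin n))
    (ht : ∀ i < k, ∃ a b : Fin n, a ≠ b ∧ t i = Equiv.swap a b)
    (hstep : ∀ i < k, u i = u (i + 1) * t i)
    (htop : NCgood (u k))
    (hcount : cyc (u k) + k ≤ cyc (u 0)) :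
    ∃ d : ℕ → NC n, (∀ i, i ≤ k → π (d i) = u i) ∧ (∀ i < k, d i ⋖ d (i + 1)) ∧
      (∀ i < k, (π (d i))⁻¹ * π (d (i + 1)) = t i) := by
  have hstep2 : ∀ i < k, cyc (u i) ≤ cyc (u (i+1)) + 1 ∧ cyc (u (i+1)) ≤ cyc (u i) + 1 := by
    intro i hik
    obtain ⟨a, b, hne, hseq⟩ := ht i hik
    have hb := cyc_mul_swap_bounds (u := u (i+1)) hne
    rw [← hseq, ← hstep i hik] at hb
    exact ⟨hb.1, hb.2⟩
  have bound1 : ∀ i, i ≤ k → cyc (u 0) ≤ cyc (u i) + i := by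
    intro i
    induction i with
    | zero => intro _; simp
    | succ i ih =>
      intro hi
      have h1 := ih (by omega)
      have h2 := (hstep2 i (by omega)).1
      omega
  have bound2 : ∀ j, ∀ i, i + j = k → cyc (u i) ≤ cyc (u k) + j := by
    intro j
    induction j with
    | zero =>
      intro i hi
      have : i = k := by omega
      subst this
      simp
    | succ j ih =>
      intro i hi
      have h1 := (hstep2 i (by omega)).1
      have h2 := ih (i+1) (by omega)
      omega
  have key : ∀ j, ∀ i, i + j = k → NCgood (u i) ∧ cyc (u i) = cyc (u k) + j := by
    intro j
    induction j with
    | zero =>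
      intro i hi
      have : i = k := by omega
      subst this
      exact ⟨htop, by simp⟩
    | succ j ih =>
      intro i hi
      have hik : i < k := by omega
      have hih := ih (i+1) (by omega)
      obtain ⟨a, b, hne, hseq⟩ := ht i hik
      by_cases hsc : (u (i+1)).SameCycle a b
      · have hcy : cyc (u i) = cyc (u (i+1)) + 1 := by
          rw [hstep i hik, hseq]
          exact cyc_mul_swap_same hsc hne
        constructor
        · rcases lt_or_gt_of_ne hne with hlt | hlt
          · have hc := (core (u (i+1)) hih.1 hsc hlt).1
            rw [hstep i hik, hseq]
            exact hc
          · have hc := (core (u (i+1)) hih.1 hsc.symm hlt).1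
            rw [hstep i hik, hseq, Equiv.swap_comm]
            exact hc
        · omega
      · exfalso
        have hcy : cyc (u i) + 1 = cyc (u (i+1)) := by
          rw [hstep i hik, hseq]
          exact cyc_mul_swap_not hsc
        have h1 := bound1 i (le_of_lt hik)
        have h2 := bound2 (k - (i+1)) (i+1) (by omega)
        omega
  have hgood : ∀ i, i ≤ k → NCgood (u i) := fun i hi => (key (k - i) i (by omega)).1
  have hdata : ∀ i, i < k → ∃ a b : Fin n, a < b ∧ (u (i+1)).SameCycle a b ∧
      u i = u (i+1) * Equiv.swap a b ∧
      (∀ x y, (u i).SameCycle x y ↔ spl (scs (u (i+1))) a b x y) := by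
    intro i hik
    obtain ⟨a, b, hne, hseq⟩ := ht i hik
    have hcyi := (key (k - i) i (by omega)).2
    have hcyi1 := (key (k - (i+1)) (i+1) (by omega)).2
    have hsc : (u (i+1)).SameCycle a b := by
      by_contra hsc
      have hh := cyc_mul_swap_not hsc
      rw [← hseq, ← hstep i hik] at hh
      have hkk : k - i = (k - (i+1)) + 1 := by omega
      omega
    rcases lt_or_gt_of_ne hne with hlt | hlt
    · obtain ⟨_, hrel, _⟩ := core (u (i+1)) (hgood (i+1) hik) hsc hlt
      refine ⟨a, b, hlt, hsc, by rw [hstep i hik, hseq], fun x y => ?_⟩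
      rw [hstep i hik, hseq]
      exact hrel x y
    · obtain ⟨_, hrel, _⟩ := core (u (i+1)) (hgood (i+1) hik) hsc.symm hlt
      refine ⟨b, a, hlt, hsc.symm, by rw [hstep i hik, hseq, Equiv.swap_comm], fun x y => ?_⟩
      rw [hstep i hik, hseq, Equiv.swap_comm]
      exact hrel x y
  set d : ℕ → NC n := fun i => ⟨scs (u (min i k)), (hgood (min i k) (min_le_right _ _)).1⟩
    with hd
  have hdval : ∀ i, i ≤ k → (d i).val = scs (u i) := by
    intro i hi
    simp only [hd, min_eq_left hi]
  have hpid : ∀ i, i ≤ k → π (d i) = u i := by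
    intro i hi
    have h1 := hπ (d i)
    rw [hdval i hi] at h1
    exact piPerm_unique h1 (hgood i hi).2
  refine ⟨d, hpid, ?_, ?_⟩
  · intro i hik
    obtain ⟨a, b, hlt, hsc, hueq, hrel⟩ := hdata i hik
    apply cov_of_spl hlt
    · rw [hdval (i+1) hik]
      exact hsc
    · intro p q
      rw [hdval i (le_of_lt hik), hdval (i+1) hik]
      exact hrel p q
  · intro i hik
    obtain ⟨a, b, hne, hseq⟩ := ht i hik
    rw [hpid i (le_of_lt hik), hpid (i+1) hik, hstep i hik, mul_inv_rev, mul_assoc,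
      inv_mul_cancel, mul_one, hseq, Equiv.swap_inv]

end NCAux


namespace NCAux
open Equiv Equiv.Perm

variable {n : ℕ} {π : NC n → Equiv.Perm (Fin n)}

lemma chain_data (hπ : ∀ σ : NC n, IsPiPerm σ.val (π σ)) (k : ℕ) (c : ℕ → NC n)
    (hcov : ∀ i < k, c i ⋖ c (i + 1)) :
    (∀ i < k, ∃ a b : Fin n, a ≠ b ∧ (π (c i))⁻¹ * π (c (i+1)) = Equiv.swap a b) ∧
    (∀ i < k, π (c i) = π (c (i+1)) * ((π (c i))⁻¹ * π (c (i+1)))) ∧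
    (∀ j, j ≤ k → cyc (π (c 0)) = cyc (π (c j)) + j) ∧
    (∀ j, j ≤ k →
      π (c j) = π (c 0) * ((List.range j).map (fun i => (π (c i))⁻¹ * π (c (i+1)))).prod) := by
  have hd : ∀ i, i < k → ∃ a b : Fin n, a < b ∧ π (c i) = π (c (i+1)) * Equiv.swap a b ∧
      cyc (π (c i)) = cyc (π (c (i+1))) + 1 := by
    intro i hi
    obtain ⟨a, b, hlt, _, heq, hcyc, _⟩ := cover_perm hπ (hcov i hi)
    exact ⟨a, b, hlt, heq, hcyc⟩
  have hts : ∀ i < k, ∃ a b : Fin n, a ≠ b ∧ (π (c i))⁻¹ * π (c (i+1)) = Equiv.swap a b := by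
    intro i hi
    obtain ⟨a, b, hlt, heq, _⟩ := hd i hi
    refine ⟨a, b, ne_of_lt hlt, ?_⟩
    rw [heq, mul_inv_rev, mul_assoc, inv_mul_cancel, mul_one, Equiv.swap_inv]
  have hrec : ∀ i < k, π (c i) = π (c (i+1)) * ((π (c i))⁻¹ * π (c (i+1))) := by
    intro i hi
    obtain ⟨a', b', hlt, heq, _⟩ := hd i hi
    have e : (π (c i))⁻¹ * π (c (i+1)) = Equiv.swap a' b' := by
      rw [heq, mul_inv_rev, mul_assoc, inv_mul_cancel, mul_one, Equiv.swap_inv]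
    rw [e, ← heq]
  refine ⟨hts, hrec, ?_, ?_⟩
  · intro j
    induction j with
    | zero => intro _; simp
    | succ j ih =>
      intro hj
      have h1 := ih (by omega)
      obtain ⟨a, b, _, _, hcyc⟩ := hd j (by omega)
      omega
  · intro j
    induction j with
    | zero => intro _; simp
    | succ j ih =>
      intro hj
      have h1 := ih (by omega)
      rw [List.range_succ, List.map_append, List.prod_append, ← mul_assoc, ← h1]
      simp only [List.map_cons, List.map_nil, List.prod_cons, List.prod_nil, mul_one]
      exact (mul_inv_cancel_left _ _).symm

end NCAux

/-- Let `ρ < σ < τ` in `NC_n`.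
(a) For any saturated chain from `ρ` to `σ` with label sequence `(α_1, …, α_k)`
(where `α_i = π(σ_{i-1})⁻¹ π(σ_i)`), there is a unique `σ'` in `NC_n` admitting a
saturated chain from `σ'` to `τ` with the exact same sequence of labels.
(b) Dually, for any saturated chain from `σ` to `τ` with label sequence
`(β_1, …, β_k)`, there is a unique `σ''` in `NC_n` admitting a saturated chain from
`ρ` to `σ''` with the same sequence of labels. -/
theorem NC_chain_label_transport (n : ℕ)
    (π : NC n → Equiv.Perm (Fin n)) (hπ : ∀ σ : NC n, IsPiPerm σ.val (π σ))
    (ρ σ τ : NC n) (hρσ : ρ < σ) (hστ : σ < τ) :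
    (∀ (k : ℕ) (c : ℕ → NC n), c 0 = ρ → c k = σ → (∀ i < k, c i ⋖ c (i + 1)) →
      ∃! σ' : NC n, ∃ d : ℕ → NC n, d 0 = σ' ∧ d k = τ ∧ (∀ i < k, d i ⋖ d (i + 1)) ∧
        ∀ i < k, (π (d i))⁻¹ * π (d (i + 1)) = (π (c i))⁻¹ * π (c (i + 1))) ∧
    (∀ (k : ℕ) (c : ℕ → NC n), c 0 = σ → c k = τ → (∀ i < k, c i ⋖ c (i + 1)) →
      ∃! σ'' : NC n, ∃ d : ℕ → NC n, d 0 = ρ ∧ d k = σ'' ∧ (∀ i < k, d i ⋖ d (i + 1)) ∧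
        ∀ i < k, (π (d i))⁻¹ * π (d (i + 1)) = (π (c i))⁻¹ * π (c (i + 1))) := by
  open NCAux in
  have hn : 0 < n := by
    rcases Nat.eq_zero_or_pos n with h0 | h
    · exfalso
      subst h0
      exact hρσ.ne (Subtype.ext (Setoid.ext (fun a b => a.elim0)))
    · exact h
  constructor
  · -- part (a)
    intro k c hc0 hck hcov
    obtain ⟨hts, hrec, hcyck, hprod⟩ := NCAux.chain_data hπ k c hcov
    set t : ℕ → Equiv.Perm (Fin n) := fun i => (π (c i))⁻¹ * π (c (i+1)) with htdef
    set u : ℕ → Equiv.Perm (Fin n) := fun i => π τ * (π σ)⁻¹ * π (c i) with hudef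
    have hstep : ∀ i < k, u i = u (i + 1) * t i := by
      intro i hi
      show π τ * (π σ)⁻¹ * π (c i) = π τ * (π σ)⁻¹ * π (c (i+1)) * t i
      rw [mul_assoc (π τ * (π σ)⁻¹) (π (c (i+1))) (t i), ← hrec i hi]
    have huk : u k = π τ := by
      show π τ * (π σ)⁻¹ * π (c k) = π τ
      rw [hck, inv_mul_cancel_right]
    have htop : NCgood (u k) := by
      rw [huk]
      exact NCAux.ncgood_pi hπ τ
    obtain ⟨L, hLs, hLeq, hLcyc⟩ := NCAux.chain_exists hπ σ τ hστ.le
    have hcount : cyc (u k) + k ≤ cyc (u 0) := by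
      have e0 : u 0 = (L.map (fun s => π σ * s * (π σ)⁻¹)).prod * π ρ := by
        show π τ * (π σ)⁻¹ * π (c 0) = _
        rw [hc0, NCAux.conj_list_prod (π σ) L, ← hLeq]
      have hb := (NCAux.swap_list_bound_left (L.map (fun s => π σ * s * (π σ)⁻¹))
        (NCAux.conj_list_swaps (π σ) L hLs) (π ρ)).1
      rw [← e0, List.length_map] at hb
      have h1 : cyc (π ρ) = cyc (π σ) + k := by
        have := hcyck k le_rfl
        rw [hc0, hck] at this
        exact this
      rw [huk]
      omega
    obtain ⟨d, hpid, hdcov, hdlab⟩ := NCAux.transport hπ k u t hts hstep htop hcount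
    have hdk : d k = τ := by
      apply NCAux.pi_injective hπ
      rw [hpid k le_rfl, huk]
    refine ⟨d 0, ⟨d, rfl, hdk, hdcov, fun i hi => hdlab i hi⟩, ?_⟩
    rintro σ'' ⟨d', hd'0, hd'k, hd'cov, hd'lab⟩
    have hval : ∀ j, ∀ i, i + j = k → π (d' i) = u i := by
      intro j
      induction j with
      | zero =>
        intro i hi
        have : i = k := by omega
        subst this
        rw [hd'k, huk]
      | succ j ih =>
        intro i hi
        have hik : i < k := by omega
        have hih := ih (i+1) (by omega)
        obtain ⟨a, b, hne, hseq⟩ := hts i hik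
        have hl' : (π (d' i))⁻¹ * π (d' (i+1)) = t i := hd'lab i hik
        have hseq' : t i = Equiv.swap a b := hseq
        have h2 : π (d' (i+1)) = π (d' i) * t i := by
          rw [← hl', mul_inv_cancel_left]
        have h3 : π (d' i) = π (d' (i+1)) * (t i)⁻¹ := by
          rw [h2, mul_inv_cancel_right]
        rw [h3, hih, hseq', Equiv.swap_inv, ← hseq', ← hstep i hik]
    have h0 : π (d' 0) = π (d 0) := by
      rw [hval k 0 (by omega), hpid 0 (by omega)]
    rw [← hd'0]
    exact NCAux.pi_injective hπ h0
  · -- part (b)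
    intro k c hc0 hck hcov
    obtain ⟨hts, hrec, hcyck, hprod⟩ := NCAux.chain_data hπ k c hcov
    set t : ℕ → Equiv.Perm (Fin n) := fun i => (π (c i))⁻¹ * π (c (i+1)) with htdef
    set u : ℕ → Equiv.Perm (Fin n) := fun i => π ρ * (π σ)⁻¹ * π (c i) with hudef
    set Y : List (Equiv.Perm (Fin n)) := (List.range k).map t with hYdef
    have hYs : ∀ s ∈ Y, ∃ a b : Fin n, a ≠ b ∧ s = Equiv.swap a b := by
      intro s hs
      obtain ⟨i, hi, rfl⟩ := List.mem_map.mp hs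
      exact hts i (List.mem_range.mp hi)
    have hYlen : Y.length = k := by simp [hYdef]
    have hYeq : π τ = π σ * Y.prod := by
      have := hprod k le_rfl
      rw [hc0, hck] at this
      exact this
    have hstep : ∀ i < k, u i = u (i + 1) * t i := by
      intro i hi
      show π ρ * (π σ)⁻¹ * π (c i) = π ρ * (π σ)⁻¹ * π (c (i+1)) * t i
      rw [mul_assoc (π ρ * (π σ)⁻¹) (π (c (i+1))) (t i), ← hrec i hi]
    have hu0 : u 0 = π ρ := by
      show π ρ * (π σ)⁻¹ * π (c 0) = π ρ
      rw [hc0, inv_mul_cancel_right]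
    have huk : u k = π ρ * Y.prod := by
      show π ρ * (π σ)⁻¹ * π (c k) = π ρ * Y.prod
      rw [hck, hYeq, mul_assoc, inv_mul_cancel_left]
    obtain ⟨X, hXs, hXeq, hXcyc⟩ := NCAux.chain_exists hπ ρ σ hρσ.le
    have hτtop : τ ≤ NCAux.topNC n := NCAux.nc_le_iff.mpr (fun _ _ _ => trivial)
    obtain ⟨Z, hZs, hZeq, hZcyc⟩ := NCAux.chain_exists hπ τ (NCAux.topNC n) hτtop
    have hctop : cyc (π (NCAux.topNC n)) = 1 := NCAux.cyc_top hπ hn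
    have hcycστ : cyc (π σ) = cyc (π τ) + k := by
      have := hcyck k le_rfl
      rw [hc0, hck] at this
      exact this
    -- exact value of cyc (u k)
    have hXC : u k = ((X.reverse.map (fun s => π ρ * s * (π ρ)⁻¹)).prod) * π τ := by
      rw [NCAux.conj_list_prod (π ρ) X.reverse, ← NCAux.swap_list_inv X hXs]
      show π ρ * (π σ)⁻¹ * π (c k) = π ρ * X.prod⁻¹ * (π ρ)⁻¹ * π τ
      rw [hck, hXeq]
      group
    have hcykupper : cyc (u k) ≤ cyc (π τ) + X.length := by
      have hb := (NCAux.swap_list_bound_left (X.reverse.map (fun s => π ρ * s * (π ρ)⁻¹))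
        (NCAux.conj_list_swaps (π ρ) X.reverse (NCAux.swap_list_reverse X hXs)) (π τ)).2
      rw [← hXC, List.length_map, List.length_reverse] at hb
      exact hb
    have hcyklower : cyc (π ρ) ≤ cyc (u k) + k := by
      have hb := (NCAux.swap_list_bound_right Y hYs (π ρ)).1
      rw [← huk, hYlen] at hb
      exact hb
    have hcyk : cyc (u k) = cyc (π τ) + X.length := by
      omega
    have htop : NCgood (u k) := by
      apply NCAux.ncgood_of_word hπ hn
        ((X.map (fun s => Y.prod⁻¹ * s * Y.prod)) ++ Z) (u k)
      · intro s hs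
        rcases List.mem_append.mp hs with h | h
        · have : ∀ s' ∈ X.map (fun s' => Y.prod⁻¹ * s' * (Y.prod⁻¹)⁻¹),
              ∃ a b : Fin n, a ≠ b ∧ s' = Equiv.swap a b :=
            NCAux.conj_list_swaps Y.prod⁻¹ X hXs
          apply this
          simpa [inv_inv] using h
        · exact hZs s h
      · rw [List.prod_append]
        have e1 : (X.map (fun s => Y.prod⁻¹ * s * Y.prod)).prod = Y.prod⁻¹ * X.prod * Y.prod := by
          have := NCAux.conj_list_prod Y.prod⁻¹ X
          simpa [inv_inv] using this
        rw [e1, huk]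
        rw [hZeq, hYeq, hXeq]
        group
      · rw [hcyk, List.length_append, List.length_map]
        omega
    have hcount : cyc (u k) + k ≤ cyc (u 0) := by
      rw [hu0, hcyk]
      omega
    obtain ⟨d, hpid, hdcov, hdlab⟩ := NCAux.transport hπ k u t hts hstep htop hcount
    have hd0 : d 0 = ρ := by
      apply NCAux.pi_injective hπ
      rw [hpid 0 (by omega), hu0]
    refine ⟨d k, ⟨d, hd0, rfl, hdcov, fun i hi => hdlab i hi⟩, ?_⟩
    rintro σ'' ⟨d', hd'0, hd'k, hd'cov, hd'lab⟩
    have hval : ∀ i, i ≤ k → π (d' i) = u i := by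
      intro i
      induction i with
      | zero =>
        intro _
        rw [hd'0, hu0]
      | succ i ih =>
        intro hi
        have hik : i < k := by omega
        have hih := ih (by omega)
        have hl' : (π (d' i))⁻¹ * π (d' (i+1)) = t i := hd'lab i hik
        have h2 : π (d' (i+1)) = π (d' i) * t i := by
          rw [← hl', mul_inv_cancel_left]
        obtain ⟨a, b, hne, hseq⟩ := hts i hik
        have hseq' : t i = Equiv.swap a b := hseq
        rw [h2, hih, hstep i hik, mul_assoc, hseq', Equiv.swap_mul_self, mul_one]
    rw [← hd'k]
    apply NCAux.pi_injective hπ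
    rw [hval k le_rfl, hpid k le_rfl]
end

section
/- The number of parking functions of length n is (n+1)^{n−1}. -/
/-- A parking function of length `n`: a sequence of elements of `[n] = {1, …, n}`
whose nondecreasing rearrangement `b_1 ≤ ⋯ ≤ b_n` satisfies `b_i ≤ i` for all `i`. -/
def IsParkingFunction (n : ℕ) (a : Fin n → ℕ) : Prop :=
  (∀ i, a i ∈ Finset.Icc 1 n) ∧
  ∃ e : Equiv.Perm (Fin n), (Monotone fun i => a (e i)) ∧
    ∀ i : Fin n, a (e i) ≤ (i : ℕ) + 1

open Finset

namespace ParkingAux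

variable {n : ℕ}

lemma card_filter_perm (e : Equiv.Perm (Fin n)) (p : Fin n → Prop) [DecidablePred p] :
    (univ.filter fun i => p (e i)).card = (univ.filter p).card := by
  apply Finset.card_bij (fun i _ => e i)
  · intro a ha
    simp only [mem_filter, mem_univ, true_and] at *
    exact ha
  · intro a _ b _ hab
    exact e.injective hab
  · intro b hb
    simp only [mem_filter, mem_univ, true_and] at *
    exact ⟨e.symm b, by simpa using hb, by simp⟩

lemma card_filter_val_lt {k : ℕ} (hk : k ≤ n) :
    (univ.filter fun i : Fin n => (i : ℕ) < k).card = k := by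
  have hb : (Finset.range k).card = (univ.filter fun i : Fin n => (i : ℕ) < k).card := by
    apply Finset.card_bij (fun j hj => (⟨j, lt_of_lt_of_le (Finset.mem_range.mp hj) hk⟩ : Fin n))
    · intro a ha
      simp only [mem_filter, mem_univ, true_and]
      exact Finset.mem_range.mp ha
    · intro a _ b _ hab
      simpa using congrArg Fin.val hab
    · intro b hb
      simp only [mem_filter, mem_univ, true_and] at hb
      exact ⟨(b : ℕ), Finset.mem_range.mpr hb, by simp⟩
  rw [← hb, Finset.card_range]

/-- Characterization of parking functions via counting. -/
lemma parking_iff (a : Fin n → ℕ) :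
    IsParkingFunction n a ↔ (∀ i, a i ∈ Finset.Icc 1 n) ∧
      ∀ k, k ≤ n → k ≤ (univ.filter fun i => a i ≤ k).card := by
  constructor
  · rintro ⟨hmem, e, _, hle⟩
    refine ⟨hmem, fun k hk => ?_⟩
    rw [← card_filter_perm e (fun i => a i ≤ k)]
    have hsub : (univ.filter fun i : Fin n => (i : ℕ) < k) ⊆
        (univ.filter fun i => a (e i) ≤ k) := by
      intro i hi
      simp only [mem_filter, mem_univ, true_and] at *
      exact le_trans (hle i) hi
    calc k = (univ.filter fun i : Fin n => (i : ℕ) < k).card := (card_filter_val_lt hk).symm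
      _ ≤ _ := Finset.card_le_card hsub
  · rintro ⟨hmem, hcount⟩
    refine ⟨hmem, Tuple.sort a, Tuple.monotone_sort a, fun i => ?_⟩
    by_contra hlt
    push_neg at hlt
    have hk : (i : ℕ) + 1 ≤ n := i.2
    have h1 := hcount ((i : ℕ) + 1) hk
    rw [← card_filter_perm (Tuple.sort a) (fun j => a j ≤ (i : ℕ) + 1)] at h1
    have hsub : (univ.filter fun j => a (Tuple.sort a j) ≤ (i : ℕ) + 1) ⊆
        (univ.filter fun j : Fin n => (j : ℕ) < (i : ℕ)) := by
      intro j hj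
      simp only [mem_filter, mem_univ, true_and] at *
      by_contra hji
      push_neg at hji
      have hij : i ≤ j := by
        rw [Fin.le_def]; exact hji
      have hmono : a (Tuple.sort a i) ≤ a (Tuple.sort a j) :=
        Tuple.monotone_sort a hij
      omega
    have h2 := Finset.card_le_card hsub
    rw [card_filter_val_lt (le_trans (Nat.le_succ _) hk)] at h2
    omega

/-- The cycle lemma: for `S` with `S (t + m) = S t - 1`, there is a unique starting
point `r < m` from which all partial windows stay above `S r`. -/
lemma cycle {m : ℕ} (hm : 0 < m) (S : ℕ → ℤ) (hS : ∀ t, S (t + m) = S t - 1) :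
    ∃! r, r < m ∧ ∀ k, k < m → S r ≤ S (r + k) := by
  classical
  have hP : ∃ r, r < m ∧ ∀ j, j < m → S r ≤ S j := by
    obtain ⟨r, hr, hmin⟩ := Finset.exists_min_image (Finset.range m) S
      ⟨0, Finset.mem_range.mpr hm⟩
    exact ⟨r, Finset.mem_range.mp hr, fun j hj => hmin j (Finset.mem_range.mpr hj)⟩
  set r := Nat.find hP with hrdef
  obtain ⟨hrm, hrmin⟩ := Nat.find_spec hP
  have hQ : ∀ k, k < m → S r ≤ S (r + k) := by
    intro k hk
    by_cases hcase : r + k < m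
    · exact hrmin _ hcase
    · have hj : r + k - m < r := by omega
      have hjm : r + k - m < m := by omega
      have heq : S (r + k) = S (r + k - m) - 1 := by
        rw [← hS]
        congr 1
        omega
      have h2 : S r ≤ S (r + k - m) := hrmin _ hjm
      have h3 : S r ≠ S (r + k - m) := by
        intro hEq
        exact Nat.find_min hP hj ⟨hjm, fun j hjlt => hEq ▸ hrmin j hjlt⟩
      have h4 : S r < S (r + k - m) := lt_of_le_of_ne h2 h3
      omega
  have key : ∀ x y, x < y → y < m → (∀ k, k < m → S x ≤ S (x + k)) →
      (∀ k, k < m → S y ≤ S (y + k)) → False := by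
    intro x y hxy hym hx hy
    have h1 : S x ≤ S (x + (y - x)) := hx _ (by omega)
    have h2 : S y ≤ S (y + (m - (y - x))) := hy _ (by omega)
    have e1 : x + (y - x) = y := by omega
    have e2 : y + (m - (y - x)) = x + m := by omega
    rw [e1] at h1
    rw [e2, hS] at h2
    omega
  refine ⟨r, ⟨hrm, hQ⟩, ?_⟩
  intro y hy
  rcases lt_trichotomy y r with h | h | h
  · exact (key y r h hrm hy.2 hQ).elim
  · exact h
  · exact (key r y h hy.1 hQ hy.2).elim

variable (h : Fin n → ZMod (n + 1))

/-- Number of indices hitting value `s`. -/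
def cnt (s : ZMod (n + 1)) : ℕ := (univ.filter fun i => h i = s).card

/-- Cumulative count of values among the residues `0, 1, …, t-1` (mod `n+1`). -/
def Nc (t : ℕ) : ℕ := ∑ j ∈ Finset.range t, cnt h ((j : ℕ) : ZMod (n + 1))

lemma Nc_add (r k : ℕ) :
    Nc h (r + k) = Nc h r + ∑ j ∈ Finset.range k, cnt h ((r + j : ℕ) : ZMod (n + 1)) := by
  induction k with
  | zero => simp
  | succ k ih =>
    rw [← Nat.add_assoc]
    show Nc h ((r + k) + 1) = _
    unfold Nc at *
    rw [Finset.sum_range_succ, Finset.sum_range_succ, ih]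
    ring

lemma sum_cnt_total : ∑ s : ZMod (n + 1), cnt h s = n := by
  have := Finset.card_eq_sum_card_fiberwise
    (f := h) (s := (univ : Finset (Fin n))) (t := (univ : Finset (ZMod (n + 1)))) (by simp)
  simpa [cnt] using this.symm

lemma sum_cnt_window (t : ℕ) :
    ∑ j ∈ Finset.range (n + 1), cnt h ((t + j : ℕ) : ZMod (n + 1)) = n := by
  rw [← Fin.sum_univ_eq_sum_range (fun j => cnt h ((t + j : ℕ) : ZMod (n + 1))) (n + 1)]
  have hinj : Function.Injective
      (fun j : Fin (n + 1) => ((t + (j : ℕ) : ℕ) : ZMod (n + 1))) := by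
    intro a b hab
    simp only at hab
    have hc : ((a : ℕ) : ZMod (n + 1)) = ((b : ℕ) : ZMod (n + 1)) := by
      push_cast at hab ⊢
      exact add_left_cancel hab
    have ha := ZMod.val_cast_of_lt a.2
    have hb := ZMod.val_cast_of_lt b.2
    apply Fin.ext
    rw [← ha, ← hb, hc]
  exact (Fintype.sum_bijective _ (Finite.injective_iff_bijective.mp hinj) _ _
    (fun x => rfl)).trans (sum_cnt_total h)

lemma Nc_period (t : ℕ) : Nc h (t + (n + 1)) = Nc h t + n := by
  rw [Nc_add, sum_cnt_window]

/-- The normalized cumulative-count function. -/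
def Sf (t : ℕ) : ℤ := (Nc h t : ℤ) - t

lemma Sf_period (t : ℕ) : Sf h (t + (n + 1)) = Sf h t - 1 := by
  unfold Sf
  rw [Nc_period]
  push_cast
  ring

lemma window (r k : ℕ) (hk : k ≤ n + 1) :
    Nc h (r + k) = Nc h r +
      (univ.filter fun i => (h i - (r : ZMod (n + 1))).val < k).card := by
  rw [Nc_add]
  congr 1
  have hset : (univ.filter fun i => (h i - (r : ZMod (n + 1))).val < k) =
      (Finset.range k).biUnion
        (fun j => univ.filter fun i => h i = (r : ZMod (n + 1)) + ((j : ℕ) : ZMod (n + 1))) := by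
    ext i
    simp only [mem_filter, mem_univ, true_and, Finset.mem_biUnion, Finset.mem_range]
    constructor
    · intro hv
      refine ⟨(h i - (r : ZMod (n + 1))).val, hv, ?_⟩
      rw [ZMod.natCast_rightInverse _]
      ring
    · rintro ⟨j, hj, hji⟩
      have : h i - (r : ZMod (n + 1)) = ((j : ℕ) : ZMod (n + 1)) := by rw [hji]; ring
      rw [this, ZMod.val_cast_of_lt (lt_of_lt_of_le hj hk)]
      exact hj
  rw [hset, Finset.card_biUnion]
  · apply Finset.sum_congr rfl
    intro j _
    unfold cnt
    congr 1
    push_cast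
    ring_nf
  · intro x hx y hy hxy
    simp only [Function.onFun]; rw [Finset.disjoint_left]
    intro i hi hi'
    simp only [mem_filter, mem_univ, true_and] at hi hi'
    have hc : ((x : ℕ) : ZMod (n + 1)) = ((y : ℕ) : ZMod (n + 1)) :=
      add_left_cancel ((hi.symm.trans hi'))
    have hx' := ZMod.val_cast_of_lt (lt_of_lt_of_le (Finset.mem_range.mp (Finset.mem_coe.mp hx)) hk)
    have hy' := ZMod.val_cast_of_lt (lt_of_lt_of_le (Finset.mem_range.mp (Finset.mem_coe.mp hy)) hk)
    exact hxy (by rw [← hx', ← hy', hc])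

/-- The shifted-parking condition for a shift `d`. -/
def Cond (d : ZMod (n + 1)) : Prop :=
  ∀ k, k ≤ n → k ≤ (univ.filter fun i => (h i - d).val < k).card

lemma cond_iff (d : ZMod (n + 1)) :
    Cond h d ↔ ∀ k, k < n + 1 → Sf h d.val ≤ Sf h (d.val + k) := by
  have hc : ((d.val : ℕ) : ZMod (n + 1)) = d := ZMod.natCast_rightInverse d
  constructor
  · intro H k hk
    have hw := window h d.val k (by omega)
    rw [hc] at hw
    have hH := H k (by omega)
    unfold Sf
    rw [hw]
    push_cast
    omega
  · intro H k hk
    have hw := window h d.val k (by omega)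
    rw [hc] at hw
    have hH := H k (by omega)
    unfold Sf at hH
    rw [hw] at hH
    push_cast at hH
    omega

lemma exists_unique_cond : ∃! d : ZMod (n + 1), Cond h d := by
  obtain ⟨r, ⟨hrm, hr⟩, huniq⟩ := cycle (Nat.succ_pos n) (Sf h) (Sf_period h)
  refine ⟨(r : ZMod (n + 1)), ?_, ?_⟩
  · show Cond h ((r : ℕ) : ZMod (n + 1))
    rw [cond_iff, ZMod.val_cast_of_lt hrm]
    exact hr
  · intro d hd
    rw [cond_iff] at hd
    have hv : d.val = r := huniq d.val ⟨ZMod.val_lt d, hd⟩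
    rw [← hv]
    exact (ZMod.natCast_rightInverse d).symm

lemma cond_of_parking (a : Fin n → ℕ) (ha : ∀ i, a i ∈ Finset.Icc 1 n)
    (hcount : ∀ k, k ≤ n → k ≤ (univ.filter fun i => a i ≤ k).card)
    (c : ZMod (n + 1)) :
    Cond (fun i => ((a i : ℕ) : ZMod (n + 1)) + c - 1) c := by
  intro k hk
  have hset : (univ.filter fun i =>
        (((fun i => ((a i : ℕ) : ZMod (n + 1)) + c - 1) i) - c).val < k)
      = (univ.filter fun i => a i ≤ k) := by
    ext i
    simp only [mem_filter, mem_univ, true_and]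
    obtain ⟨h1, h2⟩ := Finset.mem_Icc.mp (ha i)
    have he : (((a i : ℕ) : ZMod (n + 1)) + c - 1) - c
        = (((a i - 1 : ℕ)) : ZMod (n + 1)) := by
      rw [Nat.cast_sub h1]
      push_cast
      ring
    rw [he, ZMod.val_cast_of_lt (by omega)]
    omega
  rw [hset]
  exact hcount k hk

end ParkingAux

/-- The number of parking functions of length `n` is `(n + 1) ^ (n - 1)`. -/
theorem card_parking_functions (n : ℕ) :
    Nat.card {a : Fin n → ℕ // IsParkingFunction n a} = (n + 1) ^ (n - 1) := by
  classical
  set ψ : {a : Fin n → ℕ // IsParkingFunction n a} × ZMod (n + 1) → (Fin n → ZMod (n + 1)) :=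
    fun p i => ((p.1.1 i : ℕ) : ZMod (n + 1)) + p.2 with hψ
  have hbij : Function.Bijective ψ := by
    constructor
    · rintro ⟨⟨a, pa⟩, c⟩ ⟨⟨a', pa'⟩, c'⟩ hEq
      have hgi : ∀ i, ((a i : ℕ) : ZMod (n + 1)) + c = ((a' i : ℕ) : ZMod (n + 1)) + c' :=
        fun i => congrFun hEq i
      obtain ⟨hmem, hcount⟩ := (ParkingAux.parking_iff a).mp pa
      obtain ⟨hmem', hcount'⟩ := (ParkingAux.parking_iff a').mp pa'
      have hc1 : ParkingAux.Cond (fun i => ((a i : ℕ) : ZMod (n + 1)) + c - 1) c :=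
        ParkingAux.cond_of_parking a hmem hcount c
      have hc2 : ParkingAux.Cond (fun i => ((a i : ℕ) : ZMod (n + 1)) + c - 1) c' := by
        have h2 := ParkingAux.cond_of_parking a' hmem' hcount' c'
        have hgeq : (fun i => ((a i : ℕ) : ZMod (n + 1)) + c - 1)
            = (fun i => ((a' i : ℕ) : ZMod (n + 1)) + c' - 1) := by
          funext i
          rw [hgi i]
        rw [hgeq]
        exact h2
      obtain ⟨d0, _, hduniq⟩ := ParkingAux.exists_unique_cond
        (fun i => ((a i : ℕ) : ZMod (n + 1)) + c - 1)
      have hcc : c = c' := (hduniq c hc1).trans (hduniq c' hc2).symm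
      subst hcc
      have haa : a = a' := by
        funext i
        have h2 : ((a i : ℕ) : ZMod (n + 1)) = ((a' i : ℕ) : ZMod (n + 1)) :=
          add_right_cancel (hgi i)
        obtain ⟨u1, u2⟩ := Finset.mem_Icc.mp (hmem i)
        obtain ⟨v1, v2⟩ := Finset.mem_Icc.mp (hmem' i)
        have h3 := congrArg ZMod.val h2
        rwa [ZMod.val_cast_of_lt (by omega), ZMod.val_cast_of_lt (by omega)] at h3
      simp only [Prod.mk.injEq, Subtype.mk.injEq]
      exact ⟨haa, trivial⟩
    · intro g
      obtain ⟨d, hd, _⟩ := ParkingAux.exists_unique_cond (fun i => g i - 1)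
      set a : Fin n → ℕ := fun i => (g i - 1 - d).val + 1 with ha
      have hdval : ∀ k, k ≤ n →
          k ≤ (univ.filter fun i => (g i - 1 - d).val < k).card := hd
      have hlt : ∀ i, (g i - 1 - d).val < n := by
        intro i
        have hn := hdval n le_rfl
        have hcard : (univ.filter fun i => (g i - 1 - d).val < n).card
            ≤ (univ : Finset (Fin n)).card := Finset.card_filter_le _ _
        rw [Finset.card_univ, Fintype.card_fin] at hcard
        have huniv : (univ.filter fun i => (g i - 1 - d).val < n) = univ := by
          apply Finset.eq_univ_of_card
          rw [Fintype.card_fin]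
          omega
        have hmemi : i ∈ (univ.filter fun i => (g i - 1 - d).val < n) := by
          rw [huniv]
          exact Finset.mem_univ i
        exact (Finset.mem_filter.mp hmemi).2
      have hmem : ∀ i, a i ∈ Finset.Icc 1 n := by
        intro i
        simp only [Finset.mem_Icc, ha]
        have := hlt i
        omega
      have hcount : ∀ k, k ≤ n → k ≤ (univ.filter fun i => a i ≤ k).card := by
        intro k hk
        have hset : (univ.filter fun i => a i ≤ k)
            = (univ.filter fun i => (g i - 1 - d).val < k) := by
          ext i
          simp only [mem_filter, mem_univ, true_and, ha]
          omega
        rw [hset]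
        exact hdval k hk
      refine ⟨⟨⟨a, (ParkingAux.parking_iff a).mpr ⟨hmem, hcount⟩⟩, d⟩, ?_⟩
      funext i
      show ((a i : ℕ) : ZMod (n + 1)) + d = g i
      rw [ha]
      have hval : (((g i - 1 - d).val : ℕ) : ZMod (n + 1)) = g i - 1 - d :=
        ZMod.natCast_rightInverse _
      push_cast [hval]
      ring
  have hkey : Nat.card {a : Fin n → ℕ // IsParkingFunction n a} * (n + 1) = (n + 1) ^ n := by
    have h1 : Nat.card ({a : Fin n → ℕ // IsParkingFunction n a} × ZMod (n + 1))
        = Nat.card (Fin n → ZMod (n + 1)) := Nat.card_eq_of_bijective ψ hbij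
    have hfin : Nat.card (Fin n) = n := Nat.card_eq_of_equiv_fin (Equiv.refl _)
    rw [Nat.card_prod, Nat.card_zmod, Nat.card_fun, Nat.card_zmod, hfin] at h1
    exact h1
  have h2 : (n + 1) ^ (n - 1) * (n + 1) = (n + 1) ^ n := by
    cases n with
    | zero => simp
    | succ k => rw [Nat.succ_sub_one, ← pow_succ]
  exact Nat.eq_of_mul_eq_mul_right (Nat.succ_pos n) (hkey.trans h2.symm)
end

section
/- Consider n parking spots 1, …, n on a one-way street and n cars entering in order 1, …, n, where car i has preference a_i ∈ [n]: car i parks at the smallest unoccupied spot j with j ≥ a_i, and the process fails if every spot j ≥ a_i is occupied when car i arrives. Then all n cars park successfully if and only if the nondecreasing rearrangement b_1 ≤ b_2 ≤ ⋯ ≤ b_n of (a_1, …, a_n) satisfies b_i ≤ i for all i in [n]. -/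
/-- `parkSucceeds n prefs occ` : with spots `1, …, n` and the spots in `occ` already
occupied, the cars with preference list `prefs` all park successfully, where each car
in turn parks at the smallest unoccupied spot `j` with `j ≥` its preference (and the
process fails if no such spot exists). -/
def parkSucceeds (n : ℕ) : List ℕ → Finset ℕ → Prop
  | [], _ => True
  | p :: rest, occ =>
      ∃ j ∈ Finset.Icc p n, j ∉ occ ∧ (∀ k ∈ Finset.Icc p n, k ∉ occ → j ≤ k) ∧
        parkSucceeds n rest (insert j occ)

lemma countP_le_ofFn {n : ℕ} (a : Fin n → ℕ) (p : ℕ) :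
    (List.ofFn a).countP (fun x => p ≤ x) = (Finset.univ.filter fun i => p ≤ a i).card := by
  rw [List.ofFn_eq_map, List.countP_map, List.countP_eq_length_filter, Fin.univ_def]
  simp only [Finset.filter, Finset.card, Multiset.filter_coe]
  rfl

lemma card_filter_perm {n : ℕ} (e : Equiv.Perm (Fin n)) (P : Fin n → Prop) [DecidablePred P] :
    (Finset.univ.filter fun i => P (e i)).card = (Finset.univ.filter P).card := by
  have h : (Finset.univ.filter fun i => P (e i)) =
      (Finset.univ.filter P).map e.symm.toEmbedding := by
    ext k
    simp only [Finset.mem_filter, Finset.mem_map, Finset.mem_univ, true_and,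
      Equiv.coe_toEmbedding]
    constructor
    · intro hk; exact ⟨e k, hk, e.symm_apply_apply k⟩
    · rintro ⟨j, hj, rfl⟩; simpa using hj
  rw [h, Finset.card_map]

lemma park_iff (n : ℕ) : ∀ (l : List ℕ) (occ : Finset ℕ), (∀ x ∈ l, 1 ≤ x) →
    (parkSucceeds n l occ ↔
      ∀ p, 1 ≤ p → l.countP (fun x => p ≤ x) ≤ ((Finset.Icc p n) \ occ).card) := by
  intro l
  induction l with
  | nil => intro occ _; simp [parkSucceeds]
  | cons a rest ih =>
    intro occ hl
    have ha1 : 1 ≤ a := hl a List.mem_cons_self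
    constructor
    · rintro ⟨j, hj, hjocc, hmin, hrest⟩ p hp
      rw [Finset.mem_Icc] at hj
      have hIH := (ih (insert j occ) (fun x hx => hl x (List.mem_cons_of_mem _ hx))).mp
        hrest p hp
      by_cases hpa : p ≤ a
      · have hjmem : j ∈ Finset.Icc p n \ occ := by
          rw [Finset.mem_sdiff, Finset.mem_Icc]
          exact ⟨⟨le_trans hpa hj.1, hj.2⟩, hjocc⟩
        have heq : Finset.Icc p n \ insert j occ = (Finset.Icc p n \ occ).erase j := by
          ext k
          simp only [Finset.mem_sdiff, Finset.mem_insert, Finset.mem_erase]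
          tauto
        rw [heq, Finset.card_erase_of_mem hjmem] at hIH
        have hcard : 1 ≤ (Finset.Icc p n \ occ).card := Finset.card_pos.mpr ⟨j, hjmem⟩
        have hcnt : (a :: rest).countP (fun x => decide (p ≤ x)) =
            rest.countP (fun x => decide (p ≤ x)) + 1 := by
          rw [List.countP_cons]; simp [hpa]
        rw [hcnt]
        omega
      · have hcnt : (a :: rest).countP (fun x => decide (p ≤ x)) =
            rest.countP (fun x => decide (p ≤ x)) := by
          rw [List.countP_cons]; simp [hpa]
        rw [hcnt]
        refine hIH.trans (Finset.card_le_card ?_)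
        exact Finset.sdiff_subset_sdiff le_rfl (Finset.subset_insert _ _)
    · intro h
      have h1 : 1 ≤ (a :: rest).countP (fun x => decide (a ≤ x)) := by
        rw [List.countP_cons]; simp
      have hne : (Finset.Icc a n \ occ).Nonempty :=
        Finset.card_pos.mp (lt_of_lt_of_le h1 (h a ha1))
      set j := (Finset.Icc a n \ occ).min' hne with hjdef
      have hjmem := (Finset.Icc a n \ occ).min'_mem hne
      rw [Finset.mem_sdiff] at hjmem
      have hja := (Finset.mem_Icc.mp hjmem.1).1
      refine ⟨j, hjmem.1, hjmem.2, ?_, ?_⟩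
      · intro k hk hkocc
        exact Finset.min'_le _ _ (Finset.mem_sdiff.mpr ⟨hk, hkocc⟩)
      · apply (ih (insert j occ) (fun x hx => hl x (List.mem_cons_of_mem _ hx))).mpr
        intro p hp
        by_cases hpa : p ≤ a
        · have hjmem' : j ∈ Finset.Icc p n \ occ := by
            rw [Finset.mem_sdiff, Finset.mem_Icc]
            exact ⟨⟨le_trans hpa hja, (Finset.mem_Icc.mp hjmem.1).2⟩, hjmem.2⟩
          have heq : Finset.Icc p n \ insert j occ = (Finset.Icc p n \ occ).erase j := by
            ext k
            simp only [Finset.mem_sdiff, Finset.mem_insert, Finset.mem_erase]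
            tauto
          have hcnt : (a :: rest).countP (fun x => decide (p ≤ x)) =
              rest.countP (fun x => decide (p ≤ x)) + 1 := by
            rw [List.countP_cons]; simp [hpa]
          have hb := h p hp
          rw [hcnt] at hb
          rw [heq, Finset.card_erase_of_mem hjmem']
          omega
        · push_neg at hpa
          by_cases hpj : p ≤ j
          · have heq : Finset.Icc a n \ occ = Finset.Icc p n \ occ := by
              apply Finset.Subset.antisymm
              · intro k hk
                have hjk : j ≤ k := Finset.min'_le _ _ hk
                rw [Finset.mem_sdiff, Finset.mem_Icc] at hk ⊢
                exact ⟨⟨le_trans hpj hjk, hk.1.2⟩, hk.2⟩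
              · intro k hk
                rw [Finset.mem_sdiff, Finset.mem_Icc] at hk ⊢
                exact ⟨⟨le_trans (le_of_lt hpa) hk.1.1, hk.1.2⟩, hk.2⟩
            have hmono : rest.countP (fun x => decide (p ≤ x)) ≤
                rest.countP (fun x => decide (a ≤ x)) := by
              apply List.countP_mono_left
              intro x _ hx
              simp only [decide_eq_true_eq] at hx ⊢
              omega
            have hb := h a ha1
            have hcnt : (a :: rest).countP (fun x => decide (a ≤ x)) =
                rest.countP (fun x => decide (a ≤ x)) + 1 := by
              rw [List.countP_cons]; simp
            rw [hcnt] at hb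
            have hjmem' : j ∈ Finset.Icc p n \ occ := by
              rw [← heq]; exact Finset.mem_sdiff.mpr hjmem
            have heq2 : Finset.Icc p n \ insert j occ = (Finset.Icc p n \ occ).erase j := by
              ext k
              simp only [Finset.mem_sdiff, Finset.mem_insert, Finset.mem_erase]
              tauto
            rw [heq2, Finset.card_erase_of_mem hjmem', ← heq]
            omega
          · push_neg at hpj
            have heq : Finset.Icc p n \ insert j occ = Finset.Icc p n \ occ := by
              ext k
              simp only [Finset.mem_sdiff, Finset.mem_insert, Finset.mem_Icc]
              constructor
              · rintro ⟨hk, hk2⟩; exact ⟨hk, fun h2 => hk2 (Or.inr h2)⟩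
              · rintro ⟨hk, hk2⟩
                refine ⟨hk, ?_⟩
                rintro (rfl | h2)
                · omega
                · exact hk2 h2
            have hcnt : (a :: rest).countP (fun x => decide (p ≤ x)) =
                rest.countP (fun x => decide (p ≤ x)) := by
              rw [List.countP_cons]; simp; omega
            rw [heq, ← hcnt]
            exact h p hp

/-- With `n` parking spots `1, …, n` on a one-way street and `n` cars entering in
order, where car `i` has preference `a i ∈ [n]` and parks at the smallest unoccupied
spot `j ≥ a i` (failing if all such spots are occupied), all `n` cars park
successfully if and only if the nondecreasing rearrangement `b_1 ≤ ⋯ ≤ b_n` of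
`(a_1, …, a_n)` satisfies `b_i ≤ i` for every `i`. -/
theorem parking_success_iff (n : ℕ) (a : Fin n → ℕ) (ha : ∀ i, a i ∈ Finset.Icc 1 n) :
    parkSucceeds n (List.ofFn a) ∅ ↔
      ∃ e : Equiv.Perm (Fin n), (Monotone fun i => a (e i)) ∧
        ∀ i : Fin n, a (e i) ≤ (i : ℕ) + 1 := by
  have ha' : ∀ i, 1 ≤ a i ∧ a i ≤ n := fun i => Finset.mem_Icc.mp (ha i)
  rw [park_iff n (List.ofFn a) ∅ (by
    intro x hx
    rw [List.mem_ofFn] at hx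
    obtain ⟨i, rfl⟩ := hx
    exact (ha' i).1)]
  constructor
  · intro h
    refine ⟨Tuple.sort a, Tuple.monotone_sort a, ?_⟩
    intro i
    by_contra hc
    push_neg at hc
    set e := Tuple.sort a with he
    set p := (i : ℕ) + 2 with hpdef
    have hpe : p ≤ a (e i) := hc
    have hcnt := h p (by omega)
    rw [countP_le_ofFn, Finset.sdiff_empty, Nat.card_Icc] at hcnt
    rw [← card_filter_perm e (fun j => p ≤ a j)] at hcnt
    have hsub : Finset.Ici i ⊆ Finset.univ.filter (fun j => p ≤ a (e j)) := by
      intro k hk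
      rw [Finset.mem_Ici] at hk
      rw [Finset.mem_filter]
      exact ⟨Finset.mem_univ _, le_trans hpe (Tuple.monotone_sort a hk)⟩
    have hcard := Finset.card_le_card hsub
    rw [Fin.card_Ici] at hcard
    have hin : (i : ℕ) < n := i.isLt
    have han : a (e i) ≤ n := (ha' (e i)).2
    omega
  · rintro ⟨e, hm, hb⟩ p hp
    rw [countP_le_ofFn, Finset.sdiff_empty, Nat.card_Icc, ← card_filter_perm e (fun j => p ≤ a j)]
    by_cases hpn : p ≤ n
    · have hn : 0 < n := lt_of_lt_of_le hp hpn
      have hsub : Finset.univ.filter (fun j => p ≤ a (e j)) ⊆ Finset.Ici (⟨p - 1, by omega⟩ : Fin n) := by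
        intro k hk
        rw [Finset.mem_filter] at hk
        have := hb k
        rw [Finset.mem_Ici, Fin.le_def]
        simp only
        omega
      have hcard := Finset.card_le_card hsub
      rw [Fin.card_Ici] at hcard
      simp only at hcard
      omega
    · have : Finset.univ.filter (fun j => p ≤ a (e j)) = ∅ := by
        apply Finset.filter_false_of_mem
        intro k _
        have := (ha' (e k)).2
        omega
      rw [this]
      simp
end
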